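/- arXiv:1307.4649 — 7 statements merged into one kernel-verified Lean document; each statement's English description precedes it below -/
import Mathlib

section
/- For all x in an order unit space X with order unit e, Hopf's oscillation seminorm satisfies ||x||_H = 2 · inf_{λ ∈ R} ||x + λ e||_T, where ||·||_T is the Thompson (order unit) norm and ||x||_H = M(x/e) − m(x/e). -/
/-- In an order unit space, Hopf's oscillation seminorm equals twice the quotient norm
of the Thompson norm modulo the line spanned by the unit. -/
theorem stmt4 {X : Type*} [NormedAddCommGroup X] [NormedSpace ℝ X] [CompleteSpace X]
    (C : Set X) (hclosed : IsClosed C) (hconv : Convex ℝ C)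
    (hcone : ∀ (a : ℝ) (x : X), 0 ≤ a → x ∈ C → a • x ∈ C)
    (hpointed : ∀ x : X, x ∈ C → -x ∈ C → x = 0)
    (hnormal : ∃ K > (0 : ℝ), ∀ x y : X, x ∈ C → y - x ∈ C → ‖x‖ ≤ K * ‖y‖)
    (e : X) (he : e ∈ interior C) (x : X) :
    sInf {t : ℝ | t • e - x ∈ C} - sSup {t : ℝ | x - t • e ∈ C}
      = 2 * ⨅ lam : ℝ,
          max (sInf {t : ℝ | t • e - (x + lam • e) ∈ C})
              (-(sSup {t : ℝ | (x + lam • e) - t • e ∈ C})) := by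
  have heC : e ∈ C := interior_subset he
  have hadd : ∀ a b : X, a ∈ C → b ∈ C → a + b ∈ C := by
    intro a b ha hb
    have h := hconv ha hb (by norm_num : (0:ℝ) ≤ 1/2) (by norm_num : (0:ℝ) ≤ 1/2) (by norm_num)
    have := hcone 2 _ (by norm_num) h
    simpa [smul_smul, smul_add] using this
  rcases subsingleton_or_nontrivial X with hX | hX
  · -- degenerate case: X = {0}
    have hall : ∀ y : X, y ∈ C := by
      intro y; rwa [Subsingleton.elim y e]
    have hset : ∀ y : X, {t : ℝ | t • e - y ∈ C} = Set.univ := by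
      intro y; ext t; simp [hall]
    have hset' : ∀ y : X, {t : ℝ | y - t • e ∈ C} = Set.univ := by
      intro y; ext t; simp [hall]
    have hInf : sInf (Set.univ : Set ℝ) = 0 :=
      Real.sInf_of_not_bddBelow not_bddBelow_univ
    have hSup : sSup (Set.univ : Set ℝ) = 0 :=
      Real.sSup_of_not_bddAbove not_bddAbove_univ
    simp only [hset, hset', hInf, hSup]
    simp
  · -- main case
    have hene : e ≠ 0 := by
      intro h0
      rw [h0] at he
      rcases Metric.isOpen_iff.1 isOpen_interior 0 he with ⟨r, hr, hball⟩
      obtain ⟨y, hy⟩ := exists_ne (0 : X)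
      set z := (r / (2 * ‖y‖)) • y with hz
      have hyn : 0 < ‖y‖ := norm_pos_iff.2 hy
      have hzz : ‖z‖ < r := by
        rw [hz, norm_smul, Real.norm_eq_abs, abs_of_pos (by positivity : (0:ℝ) < r / (2 * ‖y‖))]
        rw [div_mul_eq_mul_div, mul_comm, div_lt_iff₀ (by positivity)]
        nlinarith
      have hzC : z ∈ C := interior_subset (hball (by simpa [Metric.mem_ball] using hzz))
      have hznC : -z ∈ C := by
        have : ‖-z‖ < r := by simpa using hzz
        exact interior_subset (hball (by simpa [Metric.mem_ball] using this))
      have hz0 : z = 0 := hpointed z hzC hznC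
      have hne : (r / (2 * ‖y‖)) ≠ 0 := by positivity
      rw [hz, smul_eq_zero] at hz0
      exact hy (hz0.resolve_left hne)
    -- ball around e
    rcases Metric.isOpen_iff.1 isOpen_interior e he with ⟨ε, hε, hball⟩
    -- existence of big multiples
    have hbig : ∀ y : X, ∃ t : ℝ, t • e - y ∈ C := by
      intro y
      refine ⟨(‖y‖ + 1) / (ε / 2), ?_⟩
      set t := (‖y‖ + 1) / (ε / 2) with ht
      have htpos : 0 < t := by positivity
      have h1 : e - (1/t) • y ∈ C := by
        apply interior_subset; apply hball
        simp only [Metric.mem_ball, dist_eq_norm]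
        have heq : ‖e - (1/t) • y - e‖ = (1/t) * ‖y‖ := by
          rw [sub_sub_cancel_left, norm_neg, norm_smul, Real.norm_eq_abs,
            abs_of_pos (by positivity : (0:ℝ) < 1/t)]
        rw [heq, ht, one_div, inv_div, div_mul_eq_mul_div, div_lt_iff₀ (by positivity)]
        nlinarith [mul_nonneg hε.le (norm_nonneg y), norm_nonneg y, hε]
      have h2 := hcone t _ htpos.le h1
      have heq : t • (e - (1/t) • y) = t • e - y := by
        rw [smul_sub, smul_smul]
        field_simp
        rw [one_smul]
      rwa [heq] at h2
    set Su : Set ℝ := {t : ℝ | t • e - x ∈ C} with hSu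
    set Sd : Set ℝ := {t : ℝ | x - t • e ∈ C} with hSd
    have hSu_ne : Su.Nonempty := by
      obtain ⟨t, ht⟩ := hbig x; exact ⟨t, ht⟩
    have hSd_ne : Sd.Nonempty := by
      obtain ⟨t, ht⟩ := hbig (-x)
      refine ⟨-t, ?_⟩
      have : x - (-t) • e = t • e - (-x) := by module
      simp only [hSd, Set.mem_setOf_eq, this]
      exact ht
    have hcomp : ∀ s ∈ Sd, ∀ t ∈ Su, s ≤ t := by
      intro s hs t ht
      by_contra h
      push_neg at h
      have h1 : (t - s) • e ∈ C := by
        have := hadd _ _ ht hs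
        have heq : (t • e - x) + (x - s • e) = (t - s) • e := by module
        rwa [heq] at this
      have h2 : (s - t) • e ∈ C := hcone (s - t) e (by linarith) heC
      have h3 : (s - t) • e = 0 := by
        apply hpointed _ h2
        have : -((s - t) • e) = (t - s) • e := by module
        rwa [this]
      rw [smul_eq_zero] at h3
      rcases h3 with h3 | h3
      · linarith [sub_eq_zero.1 (by linarith : s - t = 0)]; 
      · exact hene h3
    obtain ⟨s₀, hs₀⟩ := id hSd_ne
    obtain ⟨t₀, ht₀⟩ := id hSu_ne
    have hSu_bdd : BddBelow Su := ⟨s₀, fun t ht => hcomp s₀ hs₀ t ht⟩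
    have hSd_bdd : BddAbove Sd := ⟨t₀, fun s hs => hcomp s hs t₀ ht₀⟩
    set M := sInf Su with hM
    set m := sSup Sd with hm
    -- shift lemmas
    have hshiftu : ∀ lam : ℝ, sInf {t : ℝ | t • e - (x + lam • e) ∈ C} = M + lam := by
      intro lam
      have hset : {t : ℝ | t • e - (x + lam • e) ∈ C} = {t : ℝ | (t - lam) • e - x ∈ C} := by
        ext t
        have : t • e - (x + lam • e) = (t - lam) • e - x := by module
        simp [Set.mem_setOf_eq, this]
      rw [hset]
      apply IsGLB.csInf_eq
      · constructor
        · intro t ht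
          have : M ≤ t - lam := csInf_le hSu_bdd ht
          linarith
        · intro b hb
          have : b - lam ∈ lowerBounds Su := by
            intro s hs
            have : s + lam ∈ {t : ℝ | (t - lam) • e - x ∈ C} := by
              simpa [hSu] using hs
            have := hb this
            linarith
          have := le_csInf hSu_ne this
          linarith
      · obtain ⟨t, ht⟩ := hSu_ne
        exact ⟨t + lam, by simpa [hSu] using ht⟩
    have hshiftd : ∀ lam : ℝ, sSup {t : ℝ | (x + lam • e) - t • e ∈ C} = m + lam := by
      intro lam
      have hset : {t : ℝ | (x + lam • e) - t • e ∈ C} = {t : ℝ | x - (t - lam) • e ∈ C} := by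
        ext t
        have : (x + lam • e) - t • e = x - (t - lam) • e := by module
        simp [Set.mem_setOf_eq, this]
      rw [hset]
      apply IsLUB.csSup_eq
      · constructor
        · intro t ht
          have : t - lam ≤ m := le_csSup hSd_bdd ht
          linarith
        · intro b hb
          have : b - lam ∈ upperBounds Sd := by
            intro s hs
            have : s + lam ∈ {t : ℝ | x - (t - lam) • e ∈ C} := by
              simpa [hSd] using hs
            have := hb this
            linarith
          have := csSup_le hSd_ne this
          linarith
      · obtain ⟨t, ht⟩ := hSd_ne
        exact ⟨t + lam, by simpa [hSd] using ht⟩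
    -- now compute the infimum
    have hval : (⨅ lam : ℝ, max (sInf {t : ℝ | t • e - (x + lam • e) ∈ C})
        (-(sSup {t : ℝ | (x + lam • e) - t • e ∈ C}))) = (M - m) / 2 := by
      have hfun : ∀ lam : ℝ, max (sInf {t : ℝ | t • e - (x + lam • e) ∈ C})
          (-(sSup {t : ℝ | (x + lam • e) - t • e ∈ C})) = max (M + lam) (-(m + lam)) := by
        intro lam; rw [hshiftu lam, hshiftd lam]
      simp only [hfun]
      apply le_antisymm
      · have := ciInf_le (f := fun lam : ℝ => max (M + lam) (-(m + lam)))
          ⟨(M - m)/2, by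
            rintro y ⟨lam, rfl⟩
            have h1 : M + lam ≤ max (M + lam) (-(m + lam)) := le_max_left _ _
            have h2 : -(m + lam) ≤ max (M + lam) (-(m + lam)) := le_max_right _ _
            linarith⟩ (-(M + m)/2)
        calc (⨅ lam : ℝ, max (M + lam) (-(m + lam)))
            ≤ max (M + (-(M + m)/2)) (-(m + (-(M + m)/2))) := this
          _ = (M - m)/2 := by
              have e1 : M + (-(M + m)/2) = (M - m)/2 := by ring
              have e2 : -(m + (-(M + m)/2)) = (M - m)/2 := by ring
              rw [e1, e2, max_self]
      · apply le_ciInf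
        intro lam
        have h1 : M + lam ≤ max (M + lam) (-(m + lam)) := le_max_left _ _
        have h2 : -(m + lam) ≤ max (M + lam) (-(m + lam)) := le_max_right _ _
        linarith
    rw [hval]
    ring
end

section
/- Let ν, π be elements of the abstract simplex P(e) = {μ ∈ C* : ⟨μ,e⟩ = 1}. Then ν ⊥ π (i.e., the only μ ∈ P(e) with μ ⪰ ν/2 and μ ⪰ π/2 is μ = (ν+π)/2) if and only if the only ρ, σ ∈ P(e) with ν − π = ρ − σ are ρ = ν and σ = π. -/
/-- Characterization of disjointness in the abstract simplex: `ν ⊥ π` iff the only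
representation of `ν - π` as a difference of elements of the simplex is `(ν, π)`. -/
theorem stmt8 {X : Type*} [NormedAddCommGroup X] [NormedSpace ℝ X] [CompleteSpace X]
    (C : Set X) (hclosed : IsClosed C) (hconv : Convex ℝ C)
    (hcone : ∀ (a : ℝ) (x : X), 0 ≤ a → x ∈ C → a • x ∈ C)
    (hpointed : ∀ x : X, x ∈ C → -x ∈ C → x = 0)
    (e : X) (he : e ∈ interior C)
    (P : Set (X →L[ℝ] ℝ))
    (hP : P = {μ : X →L[ℝ] ℝ | (∀ x ∈ C, 0 ≤ μ x) ∧ μ e = 1})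
    (ν π : X →L[ℝ] ℝ) (hν : ν ∈ P) (hπ : π ∈ P) :
    ((∀ μ ∈ P, (∀ x ∈ C, 0 ≤ ((2 : ℝ) • μ - ν) x) →
        (∀ x ∈ C, 0 ≤ ((2 : ℝ) • μ - π) x) → μ = (2 : ℝ)⁻¹ • (ν + π))
      ↔ (∀ ρ ∈ P, ∀ σ ∈ P, ν - π = ρ - σ → ρ = ν ∧ σ = π)) := by
  subst hP
  obtain ⟨hνpos, hνe⟩ := hν
  obtain ⟨hπpos, hπe⟩ := hπ
  constructor
  · -- disjointness → unique representation
    intro h ρ hρ σ hσ heq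
    obtain ⟨hρpos, hρe⟩ := hρ
    obtain ⟨hσpos, hσe⟩ := hσ
    have hsum : ν + σ = ρ + π := by
      rw [sub_eq_sub_iff_add_eq_add] at heq; exact heq
    set μ : X →L[ℝ] ℝ := (2 : ℝ)⁻¹ • (ν + σ) with hμdef
    have h2μ : (2 : ℝ) • μ = ν + σ := by
      rw [hμdef, smul_smul]; norm_num
    have hμP : μ ∈ {μ : X →L[ℝ] ℝ | (∀ x ∈ C, 0 ≤ μ x) ∧ μ e = 1} := by
      constructor
      · intro x hx
        simp only [hμdef, ContinuousLinearMap.smul_apply, ContinuousLinearMap.add_apply,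
          smul_eq_mul]
        have := hνpos x hx; have := hσpos x hx; linarith
      · simp [hμdef, hνe, hσe]; norm_num
    have hμν : (2 : ℝ) • μ - ν = σ := by rw [h2μ]; abel
    have hμπ : (2 : ℝ) • μ - π = ρ := by rw [h2μ, hsum]; abel
    have := h μ hμP (by rw [hμν]; exact hσpos) (by rw [hμπ]; exact hρpos)
    have hσπ : σ = π := by
      have h2 : (2 : ℝ) • μ = (2 : ℝ) • ((2 : ℝ)⁻¹ • (ν + π)) := by rw [this]
      rw [h2μ, smul_smul] at h2
      norm_num at h2
      exact h2
    refine ⟨?_, hσπ⟩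
    have : ν - π = ρ - π := by rw [heq, hσπ]
    exact (sub_left_injective.eq_iff.mp this.symm)
  · -- unique representation → disjointness
    intro h μ hμ h1 h2
    obtain ⟨hμpos, hμe⟩ := hμ
    have hρP : (2 : ℝ) • μ - π ∈ {μ : X →L[ℝ] ℝ | (∀ x ∈ C, 0 ≤ μ x) ∧ μ e = 1} :=
      ⟨h2, by simp [hμe, hπe]; norm_num⟩
    have hσP : (2 : ℝ) • μ - ν ∈ {μ : X →L[ℝ] ℝ | (∀ x ∈ C, 0 ≤ μ x) ∧ μ e = 1} :=
      ⟨h1, by simp [hμe, hνe]; norm_num⟩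
    have hdiff : ν - π = ((2 : ℝ) • μ - π) - ((2 : ℝ) • μ - ν) := by abel
    obtain ⟨hρν, -⟩ := h _ hρP _ hσP hdiff
    have h2μ : (2 : ℝ) • μ = ν + π := by
      rw [← hρν]; abel
    calc μ = (2 : ℝ)⁻¹ • ((2 : ℝ) • μ) := by rw [smul_smul]; norm_num
    _ = (2 : ℝ)⁻¹ • (ν + π) := by rw [h2μ]
end

section
/- The extreme points of the set {ν − π : ν, π probability vectors in R^n} (the unit ball B of the dual of the diameter seminorm, up to normalization) are exactly the vectors e_i − e_j with i ≠ j, where e_i are the standard basis vectors. -/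
open Pointwise

/-- A nonneg vector summing to 1 with a coordinate equal to 1 is a basis vector. -/
lemma aux_single' {n : ℕ} (ν : Fin n → ℝ) (hpos : ∀ k, 0 ≤ ν k)
    (hsum : ∑ k, ν k = 1) (i : Fin n) (hi : ν i = 1) :
    ν = Pi.single i 1 := by
  funext k
  rcases eq_or_ne k i with rfl | hk
  · simp [hi]
  · rw [Pi.single_eq_of_ne hk]
    have h0 : ∑ m ∈ Finset.univ.erase i, ν m = 0 := by
      rw [Finset.sum_erase_eq_sub (Finset.mem_univ i), hsum, hi]; ring
    exact (Finset.sum_eq_zero_iff_of_nonneg (fun m _ => hpos m)).1 h0 k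
      (Finset.mem_erase.2 ⟨hk, Finset.mem_univ k⟩)

lemma aux_le_one' {n : ℕ} (ν : Fin n → ℝ) (hpos : ∀ k, 0 ≤ ν k)
    (hsum : ∑ k, ν k = 1) (i : Fin n) : ν i ≤ 1 := by
  calc ν i ≤ ∑ k, ν k := Finset.single_le_sum (fun k _ => hpos k) (Finset.mem_univ i)
  _ = 1 := hsum

lemma seg_eq' {a b u v : ℝ} (ha : 0 < a) (hb : 0 < b) (hab : a + b = 1)
    (hu : u ≤ 1) (hv : v ≤ 1) (h : a * u + b * v = 1) : u = 1 ∧ v = 1 := by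
  constructor <;> nlinarith

/-- the `i`-th standard basis vector. -/
def eb (n : ℕ) (i : Fin n) : Fin n → ℝ := Pi.single i 1

lemma eb_mem_simplex {n : ℕ} (i : Fin n) :
    (∀ k, 0 ≤ eb n i k) ∧ ∑ k, eb n i k = 1 := by
  constructor
  · intro k
    rcases eq_or_ne k i with rfl | hk
    · simp [eb]
    · simp [eb, Pi.single_eq_of_ne hk]
  · simp [eb, Finset.sum_pi_single']

lemma aux_mem' {n : ℕ} (ν π : Fin n → ℝ) (hν0 : ∀ k, 0 ≤ ν k) (hν1 : ∑ k, ν k = 1)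
    (hπ0 : ∀ k, 0 ≤ π k) (hπ1 : ∑ k, π k = 1) (i j : Fin n)
    (hi : ν i - π i = 1) (hj : ν j - π j = -1) :
    ν - π = Pi.single i 1 - Pi.single j 1 := by
  have h1 : ν i = 1 := le_antisymm (aux_le_one' ν hν0 hν1 i) (by have := hπ0 i; linarith)
  have h2 : π j = 1 := le_antisymm (aux_le_one' π hπ0 hπ1 j) (by have := hν0 j; linarith)
  rw [aux_single' ν hν0 hν1 i h1, aux_single' π hπ0 hπ1 j h2]

/-- The extreme points of `P - P` (P the standard simplex) are the vectors
`e_i - e_j` with `i ≠ j`. -/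
theorem stmt12 (n : ℕ) (hn : 2 ≤ n) :
    Set.extremePoints ℝ
        {z : Fin n → ℝ | ∃ ν π : Fin n → ℝ,
          ((∀ i, 0 ≤ ν i) ∧ ∑ i, ν i = 1) ∧
          ((∀ i, 0 ≤ π i) ∧ ∑ i, π i = 1) ∧ z = ν - π}
      = {z : Fin n → ℝ | ∃ i j : Fin n, i ≠ j ∧
          z = Pi.single i (1 : ℝ) - Pi.single j 1} := by
  set B : Set (Fin n → ℝ) := {z : Fin n → ℝ | ∃ ν π : Fin n → ℝ,
          ((∀ i, 0 ≤ ν i) ∧ ∑ i, ν i = 1) ∧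
          ((∀ i, 0 ≤ π i) ∧ ∑ i, π i = 1) ∧ z = ν - π} with hBdef
  have hstd : convexHull ℝ (Set.range (eb n)) = stdSimplex ℝ (Fin n) := by
    have he : eb n = fun i j : Fin n => if i = j then (1:ℝ) else 0 := by
      funext i j
      rw [eb, Pi.single_apply]
      simp [eq_comm]
    rw [he]
    convert convexHull_basis_eq_stdSimplex (R := ℝ) (Fin n) using 2
  have hB : B = convexHull ℝ (Set.range (eb n) - Set.range (eb n)) := by
    rw [convexHull_sub, hstd]
    ext z
    constructor
    · rintro ⟨ν, π, hν, hπ, rfl⟩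
      exact ⟨ν, hν, π, hπ, rfl⟩
    · rintro ⟨ν, hν, π, hπ, rfl⟩
      exact ⟨ν, π, hν, hπ, rfl⟩
  apply Set.Subset.antisymm
  · intro z hz
    have hz' : z ∈ Set.range (eb n) - Set.range (eb n) := by
      apply extremePoints_convexHull_subset (𝕜 := ℝ)
      rwa [← hB]
    obtain ⟨x, ⟨i, rfl⟩, y, ⟨j, rfl⟩, rfl⟩ := hz'
    rcases eq_or_ne i j with rfl | hij
    · -- the point is 0, which is not extreme
      exfalso
      have h2 : (1 : ℕ) < n := hn
      set a : Fin n := ⟨0, by omega⟩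
      set b : Fin n := ⟨1, by omega⟩
      have hab : a ≠ b := Fin.ne_of_val_ne (by norm_num)
      have hmemw : eb n a - eb n b ∈ B :=
        ⟨eb n a, eb n b, eb_mem_simplex a, eb_mem_simplex b, rfl⟩
      have hmemw' : eb n b - eb n a ∈ B :=
        ⟨eb n b, eb n a, eb_mem_simplex b, eb_mem_simplex a, rfl⟩
      have hseg : eb n i - eb n i ∈ openSegment ℝ (eb n a - eb n b) (eb n b - eb n a) :=
        ⟨1/2, 1/2, by norm_num, by norm_num, by norm_num, by module⟩
      have heq := (hz.2 hmemw hmemw' hseg)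
      have h0 := congrFun heq a
      simp only [eb, Pi.sub_apply, Pi.single_eq_same,
        Pi.single_eq_of_ne hab, Pi.single_eq_of_ne (Ne.symm hab), sub_self] at h0
      norm_num at h0
    · exact ⟨i, j, hij, rfl⟩
  · rintro z ⟨i, j, hij, rfl⟩
    rw [mem_extremePoints]
    constructor
    · exact ⟨eb n i, eb n j, eb_mem_simplex i, eb_mem_simplex j, rfl⟩
    rintro x ⟨ν₁, π₁, ⟨hν₁0, hν₁1⟩, ⟨hπ₁0, hπ₁1⟩, rfl⟩
      y ⟨ν₂, π₂, ⟨hν₂0, hν₂1⟩, ⟨hπ₂0, hπ₂1⟩, rfl⟩ hseg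
    obtain ⟨a, b, ha, hb, hab, habz⟩ := hseg
    have hI := congrFun habz i
    have hJ := congrFun habz j
    simp only [Pi.add_apply, Pi.smul_apply, Pi.sub_apply, smul_eq_mul, Pi.single_eq_same,
      Pi.single_eq_of_ne hij, Pi.single_eq_of_ne (Ne.symm hij)] at hI hJ
    -- bounds
    have hu1 : ν₁ i - π₁ i ≤ 1 := by
      have := aux_le_one' ν₁ hν₁0 hν₁1 i; have := hπ₁0 i; linarith
    have hv1 : ν₂ i - π₂ i ≤ 1 := by
      have := aux_le_one' ν₂ hν₂0 hν₂1 i; have := hπ₂0 i; linarith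
    have hu2 : -(ν₁ j - π₁ j) ≤ 1 := by
      have := aux_le_one' π₁ hπ₁0 hπ₁1 j; have := hν₁0 j; linarith
    have hv2 : -(ν₂ j - π₂ j) ≤ 1 := by
      have := aux_le_one' π₂ hπ₂0 hπ₂1 j; have := hν₂0 j; linarith
    have hIeq := seg_eq' ha hb hab hu1 hv1 (by linarith)
    have hJeq := seg_eq' ha hb hab hu2 hv2 (by linarith)
    constructor
    · exact aux_mem' ν₁ π₁ hν₁0 hν₁1 hπ₁0 hπ₁1 i j hIeq.1 (by linarith [hJeq.1])
    · exact aux_mem' ν₂ π₂ hν₂0 hν₂1 hπ₂0 hπ₂1 i j hIeq.2 (by linarith [hJeq.2])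
end

section
/- For a row-stochastic n×n matrix A, the contraction rate of x ↦ Ax with respect to the diameter seminorm, sup{Δ(Ax)/Δ(x) : Δ(x) ≠ 0}, equals the Doeblin coefficient (1/2)·max_{i<j} Σ_s |A_{is} − A_{js}|. -/
/-- Diameter seminorm. -/
private noncomputable def Dm {n : ℕ} (x : Fin n → ℝ) : ℝ := ⨆ p : Fin n × Fin n, (x p.1 - x p.2)

private lemma Dm_bdd {n : ℕ} (x : Fin n → ℝ) :
    BddAbove (Set.range fun p : Fin n × Fin n => x p.1 - x p.2) :=
  (Set.finite_range _).bddAbove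

private lemma Dm_nonneg {n : ℕ} (hn : 0 < n) (x : Fin n → ℝ) : 0 ≤ Dm x := by
  have := le_ciSup (Dm_bdd x) ((⟨0, hn⟩ : Fin n), (⟨0, hn⟩ : Fin n))
  simpa [Dm] using this

private lemma le_Dm {n : ℕ} (x : Fin n → ℝ) (i j : Fin n) : x i - x j ≤ Dm x :=
  le_ciSup (Dm_bdd x) (i, j)

private lemma Dm_le {n : ℕ} [Nonempty (Fin n)] (x : Fin n → ℝ) (c : ℝ)
    (h : ∀ i j : Fin n, x i - x j ≤ c) : Dm x ≤ c :=
  ciSup_le fun p => h p.1 p.2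

private lemma half_sum {n : ℕ} (a : Fin n → ℝ) (ha : ∑ k, a k = 0) :
    ∑ k, max (a k) 0 = (∑ k, |a k|) / 2 := by
  have h1 : ∑ k, (2 * max (a k) 0 - a k) = ∑ k, |a k| := by
    apply Finset.sum_congr rfl
    intro k _
    rcases le_or_gt 0 (a k) with h | h
    · rw [max_eq_left h, abs_of_nonneg h]; ring
    · rw [max_eq_right h.le, abs_of_neg h]; ring
  have h2 : ∑ k, (2 * max (a k) 0 - a k) = 2 * ∑ k, max (a k) 0 - ∑ k, a k := by
    rw [Finset.sum_sub_distrib, Finset.mul_sum]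
  rw [h2, ha] at h1
  linarith

private lemma max_neg_eq {a : ℝ} : max (-a) 0 = max a 0 - a := by
  rcases le_or_gt 0 a with h | h
  · rw [max_eq_left h, max_eq_right (by linarith)]; ring
  · rw [max_eq_right h.le, max_eq_left (by linarith)]; ring

private lemma key_sum {n : ℕ} [NeZero n] (a x : Fin n → ℝ) (ha : ∑ k, a k = 0) :
    ∑ k, a k * x k ≤ (∑ k, |a k|) / 2 * Dm x := by
  obtain ⟨kM, hkM⟩ := Finite.exists_max x
  obtain ⟨km, hkm⟩ := Finite.exists_min x
  have hs : ∑ k, max (a k) 0 = (∑ k, |a k|) / 2 := half_sum a ha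
  have hs' : ∑ k, max (-a k) 0 = (∑ k, |a k|) / 2 := by
    simp_rw [max_neg_eq]
    rw [Finset.sum_sub_distrib, ha, hs]; ring
  have step : ∑ k, a k * x k ≤
      (∑ k, max (a k) 0) * x kM - (∑ k, max (-a k) 0) * x km := by
    rw [Finset.sum_mul, Finset.sum_mul, ← Finset.sum_sub_distrib]
    apply Finset.sum_le_sum
    intro k _
    have hx1 : x k ≤ x kM := hkM k
    have hx2 : x km ≤ x k := hkm k
    have hdecomp : a k = max (a k) 0 - max (-a k) 0 := by
      rw [max_neg_eq]; ring
    have h1 : max (a k) 0 * x k ≤ max (a k) 0 * x kM :=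
      mul_le_mul_of_nonneg_left hx1 (le_max_right _ _)
    have h2 : max (-a k) 0 * x km ≤ max (-a k) 0 * x k :=
      mul_le_mul_of_nonneg_left hx2 (le_max_right _ _)
    calc a k * x k = max (a k) 0 * x k - max (-a k) 0 * x k := by
          rw [← sub_mul, ← hdecomp]
      _ ≤ max (a k) 0 * x kM - max (-a k) 0 * x km := by linarith
  rw [hs, hs'] at step
  have hxd : x kM - x km ≤ Dm x := le_Dm x kM km
  have hnn : 0 ≤ (∑ k, |a k|) / 2 := by positivity
  calc ∑ k, a k * x k ≤ (∑ k, |a k|) / 2 * x kM - (∑ k, |a k|) / 2 * x km := step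
    _ = (∑ k, |a k|) / 2 * (x kM - x km) := by ring
    _ ≤ (∑ k, |a k|) / 2 * Dm x := mul_le_mul_of_nonneg_left hxd hnn

/-- For a row-stochastic matrix, the contraction rate with respect to the diameter
seminorm equals the Doeblin contraction coefficient. -/
theorem stmt13 (n : ℕ) (hn : 2 ≤ n) (A : Matrix (Fin n) (Fin n) ℝ)
    (hpos : ∀ i j, 0 ≤ A i j) (hrow : ∀ i, ∑ j, A i j = 1) :
    sSup {r : ℝ | ∃ x : Fin n → ℝ,
        (⨆ p : Fin n × Fin n, (x p.1 - x p.2)) ≠ 0 ∧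
        r = (⨆ p : Fin n × Fin n, (A.mulVec x p.1 - A.mulVec x p.2)) /
            (⨆ p : Fin n × Fin n, (x p.1 - x p.2))}
      = (1 / 2) * sSup {s : ℝ | ∃ i j : Fin n, i < j ∧ s = ∑ k, |A i k - A j k|} := by
  have hn0 : 0 < n := by omega
  haveI : NeZero n := ⟨by omega⟩
  show sSup {r : ℝ | ∃ x : Fin n → ℝ, Dm x ≠ 0 ∧ r = Dm (A.mulVec x) / Dm x}
      = (1 / 2) * sSup {s : ℝ | ∃ i j : Fin n, i < j ∧ s = ∑ k, |A i k - A j k|}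
  set S : Set ℝ := {r : ℝ | ∃ x : Fin n → ℝ, Dm x ≠ 0 ∧ r = Dm (A.mulVec x) / Dm x} with hS
  set T : Set ℝ := {s : ℝ | ∃ i j : Fin n, i < j ∧ s = ∑ k, |A i k - A j k|} with hT
  -- facts about T
  have hTfin : T.Finite := by
    apply Set.Finite.subset
      (Set.finite_range fun p : Fin n × Fin n => ∑ k, |A p.1 k - A p.2 k|)
    rintro s ⟨i, j, _, rfl⟩
    exact ⟨(i, j), rfl⟩
  have hTne : T.Nonempty :=
    ⟨∑ k, |A ⟨0, hn0⟩ k - A ⟨1, hn⟩ k|, ⟨0, hn0⟩, ⟨1, hn⟩, by simp [Fin.lt_def], rfl⟩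
  set M : ℝ := sSup T with hM
  have hMmem : M ∈ T := hTne.csSup_mem hTfin
  have hMub : ∀ s ∈ T, s ≤ M := fun s hs => le_csSup hTfin.bddAbove hs
  have hM0 : 0 ≤ M := by
    obtain ⟨i, j, _, hs⟩ := hMmem
    rw [hs]; positivity
  have hrowsub : ∀ i j : Fin n, ∑ k, (A i k - A j k) = 0 := by
    intro i j; rw [Finset.sum_sub_distrib, hrow, hrow]; ring
  have hpair : ∀ i j : Fin n, ∑ k, |A i k - A j k| ≤ M := by
    intro i j
    rcases lt_trichotomy i j with h | h | h
    · exact hMub _ ⟨i, j, h, rfl⟩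
    · subst h; simp [hM0]
    · have he : ∑ k, |A i k - A j k| = ∑ k, |A j k - A i k| := by
        simp [abs_sub_comm]
      rw [he]; exact hMub _ ⟨j, i, h, rfl⟩
  -- the contraction bound
  have hcontr : ∀ x : Fin n → ℝ, Dm (A.mulVec x) ≤ M / 2 * Dm x := by
    intro x
    apply Dm_le
    intro i j
    have hmv : A.mulVec x i - A.mulVec x j = ∑ k, (A i k - A j k) * x k := by
      simp [Matrix.mulVec, dotProduct, ← Finset.sum_sub_distrib, sub_mul]
    rw [hmv]
    calc ∑ k, (A i k - A j k) * x k ≤ (∑ k, |A i k - A j k|) / 2 * Dm x :=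
          key_sum _ x (hrowsub i j)
      _ ≤ M / 2 * Dm x := by
          apply mul_le_mul_of_nonneg_right _ (Dm_nonneg hn0 x)
          linarith [hpair i j]
  -- membership : M/2 ∈ S
  have hmemS : M / 2 ∈ S := by
    by_cases hMpos : 0 < M
    · obtain ⟨i0, j0, hij, hMsum⟩ := hMmem
      set a : Fin n → ℝ := fun k => A i0 k - A j0 k with ha
      have hasum : ∑ k, a k = 0 := hrowsub i0 j0
      have hane : ∃ k, a k ≠ 0 := by
        by_contra h
        push_neg at h
        have h' : ∀ k, A i0 k - A j0 k = 0 := h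
        have : M = 0 := by rw [hMsum]; simp [h']
        linarith
      obtain ⟨kp, hkp⟩ : ∃ k, 0 < a k := by
        by_contra h
        push_neg at h
        have hzero := (Finset.sum_eq_zero_iff_of_nonpos (fun k _ => h k)).mp hasum
        obtain ⟨k, hk⟩ := hane
        exact hk (hzero k (Finset.mem_univ k))
      obtain ⟨kn, hkn⟩ : ∃ k, a k < 0 := by
        by_contra h
        push_neg at h
        have hzero := (Finset.sum_eq_zero_iff_of_nonneg (fun k _ => h k)).mp hasum
        obtain ⟨k, hk⟩ := hane
        exact hk (hzero k (Finset.mem_univ k))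
      set x0 : Fin n → ℝ := fun k => if 0 ≤ a k then 1 else 0 with hx0
      have hx0le : ∀ k, x0 k ≤ 1 := by
        intro k; simp only [hx0]; split <;> norm_num
      have hx0ge : ∀ k, 0 ≤ x0 k := by
        intro k; simp only [hx0]; split <;> norm_num
      have hDx0le : Dm x0 ≤ 1 := by
        apply Dm_le
        intro i j
        have := hx0le i; have := hx0ge j; linarith
      have hDx0ge : (1 : ℝ) ≤ Dm x0 := by
        have h1 : x0 kp = 1 := by simp [hx0, hkp.le]
        have h2 : x0 kn = 0 := by simp [hx0, not_le.mpr hkn]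
        have := le_Dm x0 kp kn
        rw [h1, h2] at this; linarith
      have hDx0 : Dm x0 = 1 := le_antisymm hDx0le hDx0ge
      have hdot : ∑ k, a k * x0 k = M / 2 := by
        have : ∀ k, a k * x0 k = max (a k) 0 := by
          intro k
          simp only [hx0]
          rcases le_or_gt 0 (a k) with h | h
          · rw [if_pos h, max_eq_left h]; ring
          · rw [if_neg (not_le.mpr h), max_eq_right h.le]; ring
        rw [Finset.sum_congr rfl (fun k _ => this k), half_sum a hasum, ← hMsum]
      have hAge : M / 2 ≤ Dm (A.mulVec x0) := by
        have hmv : A.mulVec x0 i0 - A.mulVec x0 j0 = ∑ k, a k * x0 k := by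
          simp [Matrix.mulVec, dotProduct, ha, ← Finset.sum_sub_distrib, sub_mul]
        have := le_Dm (A.mulVec x0) i0 j0
        rw [hmv, hdot] at this
        exact this
      have hAle : Dm (A.mulVec x0) ≤ M / 2 := by
        have := hcontr x0
        rw [hDx0] at this; linarith
      refine ⟨x0, by rw [hDx0]; norm_num, ?_⟩
      rw [hDx0, le_antisymm hAle hAge, div_one]
    · have hMz : M = 0 := le_antisymm (not_lt.mp hMpos) hM0
      set x1 : Fin n → ℝ := fun k => if k = ⟨0, hn0⟩ then 1 else 0 with hx1
      have hne : (⟨1, hn⟩ : Fin n) ≠ ⟨0, hn0⟩ := by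
        simp [Fin.ext_iff]
      have hDx1 : (1 : ℝ) ≤ Dm x1 := by
        have := le_Dm x1 ⟨0, hn0⟩ ⟨1, hn⟩
        simp only [hx1, if_pos rfl, if_neg hne] at this
        linarith
      have hDne : Dm x1 ≠ 0 := by intro h; rw [h] at hDx1; linarith
      have hAz : Dm (A.mulVec x1) = 0 := by
        have h1 := hcontr x1
        rw [hMz] at h1
        simp only [zero_div, zero_mul] at h1
        exact le_antisymm h1 (Dm_nonneg hn0 _)
      exact ⟨x1, hDne, by rw [hAz, hMz, zero_div, zero_div]⟩
  have hub : ∀ r ∈ S, r ≤ M / 2 := by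
    rintro r ⟨x, hx, rfl⟩
    have hDpos : 0 < Dm x := lt_of_le_of_ne (Dm_nonneg hn0 x) (Ne.symm hx)
    rw [div_le_iff₀ hDpos]
    exact hcontr x
  have hfin : sSup S = M / 2 :=
    le_antisymm (csSup_le ⟨M / 2, hmemS⟩ hub)
      (le_csSup ⟨M / 2, fun r hr => hub r hr⟩ hmemS)
  rw [hfin]; ring
end

section
/- For a row-stochastic matrix A, the contraction rate δ(A) of ν ↦ νA on probability vectors with respect to the l^1 norm, i.e., max{||νA − πA||_1 / ||ν − π||_1 : ν ≠ π probability vectors}, equals max{||νA||_1 : ν ∈ R^n, ||ν||_1 = 1, Σν_i = 0}, and also equals the contraction rate of x ↦ Ax with respect to the diameter seminorm Δ. -/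
open Finset

/-- key averaging lemma -/
lemma lemB {n : ℕ} (hn : 0 < n) (ν x : Fin n → ℝ) (h0 : ∑ i, ν i = 0)
    (h1 : ∑ i, |ν i| = 1) :
    ∑ i, ν i * x i ≤ (1/2) * ⨆ p : Fin n × Fin n, (x p.1 - x p.2) := by
  haveI : NeZero n := ⟨hn.ne'⟩
  obtain ⟨i0, hi0⟩ := Finite.exists_max x
  obtain ⟨j0, hj0⟩ := Finite.exists_min x
  have hb : BddAbove (Set.range fun p : Fin n × Fin n => x p.1 - x p.2) :=
    (Set.finite_range _).bddAbove
  have key : ∑ i, ν i * x i ≤ (1/2) * (x i0 - x j0) := by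
    have e1 : ∑ i, ν i * x i
        = (∑ i, ((ν i + |ν i|)/2) * x i) - ∑ i, ((|ν i| - ν i)/2) * x i := by
      rw [← Finset.sum_sub_distrib]
      exact Finset.sum_congr rfl fun i _ => by ring
    have e2 : (∑ i, ((ν i + |ν i|)/2) * x i) ≤ ∑ i, ((ν i + |ν i|)/2) * x i0 := by
      refine Finset.sum_le_sum fun i _ => ?_
      have hc : 0 ≤ (ν i + |ν i|)/2 := by
        have := neg_abs_le (ν i); linarith
      exact mul_le_mul_of_nonneg_left (hi0 i) hc
    have e3 : ∑ i, ((|ν i| - ν i)/2) * x j0 ≤ ∑ i, ((|ν i| - ν i)/2) * x i := by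
      refine Finset.sum_le_sum fun i _ => ?_
      have hc : 0 ≤ (|ν i| - ν i)/2 := by
        have := le_abs_self (ν i); linarith
      exact mul_le_mul_of_nonneg_left (hj0 i) hc
    have e4 : (∑ i, ((ν i + |ν i|)/2) * x i0) = (1/2) * x i0 := by
      rw [← Finset.sum_mul, ← Finset.sum_div, Finset.sum_add_distrib, h0, h1]; ring
    have e5 : (∑ i, ((|ν i| - ν i)/2) * x j0) = (1/2) * x j0 := by
      rw [← Finset.sum_mul, ← Finset.sum_div, Finset.sum_sub_distrib, h0, h1]; ring
    rw [e1]
    calc (∑ i, ((ν i + |ν i|)/2) * x i) - ∑ i, ((|ν i| - ν i)/2) * x i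
        ≤ (∑ i, ((ν i + |ν i|)/2) * x i0) - ∑ i, ((|ν i| - ν i)/2) * x j0 := by
          exact sub_le_sub e2 e3
      _ = (1/2) * (x i0 - x j0) := by rw [e4, e5]; ring
  refine key.trans ?_
  have : x i0 - x j0 ≤ ⨆ p : Fin n × Fin n, (x p.1 - x p.2) :=
    le_ciSup hb (i0, j0)
  linarith

lemma exists_pos_neg {n : ℕ} (c : Fin n → ℝ) (h0 : ∑ i, c i = 0)
    (hne : ∃ i, c i ≠ 0) : (∃ i, 0 < c i) ∧ (∃ i, c i < 0) := by
  obtain ⟨i, hi⟩ := hne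
  constructor
  · by_contra h
    push_neg at h
    have := (Finset.sum_eq_zero_iff_of_nonpos (fun j _ => h j)).mp h0 i (Finset.mem_univ i)
    exact hi this
  · by_contra h
    push_neg at h
    have := (Finset.sum_eq_zero_iff_of_nonneg (fun j _ => h j)).mp h0 i (Finset.mem_univ i)
    exact hi this

lemma lemA {n : ℕ} (hn : 0 < n) (A : Matrix (Fin n) (Fin n) ℝ)
    (ν : Fin n → ℝ) (h1 : ∑ i, |ν i| = 1) (h0 : ∑ i, ν i = 0) (i0 j0 : Fin n)
    (hmax : ∀ i j : Fin n, ∑ k, |A i k - A j k| ≤ ∑ k, |A i0 k - A j0 k|) :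
    ∑ j, |Matrix.vecMul ν A j| ≤ (1/2) * ∑ k, |A i0 k - A j0 k| := by
  haveI : NeZero n := ⟨hn.ne'⟩
  set s : Fin n → ℝ := fun j => if 0 ≤ Matrix.vecMul ν A j then 1 else -1 with hs
  set y : Fin n → ℝ := fun i => ∑ j, A i j * s j with hy
  have habs : ∀ j, |Matrix.vecMul ν A j| = s j * Matrix.vecMul ν A j := by
    intro j; by_cases h : 0 ≤ Matrix.vecMul ν A j
    · simp [hs, h, abs_of_nonneg h]
    · push_neg at h; simp [hs, not_le.mpr h, abs_of_neg h]
  have hvm : ∀ j, Matrix.vecMul ν A j = ∑ i, ν i * A i j := by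
    intro j; simp [Matrix.vecMul, dotProduct]
  have hswap : ∑ j, |Matrix.vecMul ν A j| = ∑ i, ν i * y i := by
    calc ∑ j, |Matrix.vecMul ν A j| = ∑ j, s j * ∑ i, ν i * A i j := by
          simp_rw [habs, hvm]
      _ = ∑ j, ∑ i, s j * (ν i * A i j) := by simp_rw [Finset.mul_sum]
      _ = ∑ i, ∑ j, s j * (ν i * A i j) := Finset.sum_comm
      _ = ∑ i, ν i * y i := by
          refine Finset.sum_congr rfl fun i _ => ?_
          rw [hy, Finset.mul_sum]
          exact Finset.sum_congr rfl fun j _ => by ring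
  rw [hswap]
  refine (lemB hn ν y h0 h1).trans ?_
  have hD : ∀ p : Fin n × Fin n, y p.1 - y p.2 ≤ ∑ k, |A p.1 k - A p.2 k| := by
    intro p
    have he : y p.1 - y p.2 = ∑ k, (A p.1 k - A p.2 k) * s k := by
      rw [hy, ← Finset.sum_sub_distrib]
      exact Finset.sum_congr rfl fun k _ => by ring
    rw [he]
    refine Finset.sum_le_sum fun k _ => ?_
    have hsk : |s k| = 1 := by
      by_cases h : 0 ≤ Matrix.vecMul ν A k <;> simp [hs, h]
    calc (A p.1 k - A p.2 k) * s k ≤ |(A p.1 k - A p.2 k) * s k| := le_abs_self _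
      _ = |A p.1 k - A p.2 k| := by rw [abs_mul, hsk, mul_one]
  have hle : (⨆ p : Fin n × Fin n, (y p.1 - y p.2))
      ≤ ∑ k, |A i0 k - A j0 k| :=
    ciSup_le fun p => (hD p).trans (hmax p.1 p.2)
  linarith


lemma two_max_eq (a : ℝ) : 2 * max a 0 = a + |a| := by
  rcases le_total 0 a with h | h
  · rw [max_eq_left h, abs_of_nonneg h]; ring
  · rw [max_eq_right h, abs_of_nonpos h]; ring

lemma set_eq {n : ℕ} (A : Matrix (Fin n) (Fin n) ℝ) :
    {r : ℝ | ∃ ν π : Fin n → ℝ,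
        ((∀ i, 0 ≤ ν i) ∧ ∑ i, ν i = 1) ∧ ((∀ i, 0 ≤ π i) ∧ ∑ i, π i = 1) ∧ ν ≠ π ∧
        r = (∑ i, |(Matrix.vecMul ν A - Matrix.vecMul π A) i|) / (∑ i, |ν i - π i|)}
      = {r : ℝ | ∃ ν : Fin n → ℝ, (∑ i, |ν i| = 1) ∧ (∑ i, ν i = 0) ∧
          r = ∑ i, |Matrix.vecMul ν A i|} := by
  ext r
  simp only [Set.mem_setOf_eq]
  constructor
  · rintro ⟨ν, π, ⟨hν0, hν1⟩, ⟨hπ0, hπ1⟩, hne, rfl⟩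
    set N := ∑ i, |ν i - π i| with hN
    have hNpos : 0 < N := by
      obtain ⟨i, hi⟩ := Function.ne_iff.mp hne
      have h1 : 0 < |ν i - π i| := abs_pos.mpr (sub_ne_zero.mpr hi)
      have h2 : |ν i - π i| ≤ ∑ j, |ν j - π j| :=
        Finset.single_le_sum (f := fun j => |ν j - π j|) (fun j _ => abs_nonneg _) (Finset.mem_univ i)
      rw [hN]; linarith
    refine ⟨N⁻¹ • (ν - π), ?_, ?_, ?_⟩
    · have h : ∀ i, |(N⁻¹ • (ν - π)) i| = N⁻¹ * |ν i - π i| := by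
        intro i
        simp [abs_mul, abs_of_nonneg (inv_nonneg.mpr hNpos.le)]
      simp_rw [h, ← Finset.mul_sum]
      rw [← hN, inv_mul_cancel₀ hNpos.ne']
    · simp_rw [Pi.smul_apply, Pi.sub_apply, smul_eq_mul, ← Finset.mul_sum,
        Finset.sum_sub_distrib, hν1, hπ1]
      ring
    · have hv : Matrix.vecMul (N⁻¹ • (ν - π)) A
          = N⁻¹ • (Matrix.vecMul ν A - Matrix.vecMul π A) := by
        rw [Matrix.smul_vecMul, Matrix.sub_vecMul]
      rw [hv]
      have h2 : ∀ i, |(N⁻¹ • (Matrix.vecMul ν A - Matrix.vecMul π A)) i|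
          = N⁻¹ * |(Matrix.vecMul ν A - Matrix.vecMul π A) i| := by
        intro i; simp [abs_mul, abs_of_nonneg (inv_nonneg.mpr hNpos.le)]
      simp_rw [h2, ← Finset.mul_sum]
      rw [div_eq_inv_mul]
  · rintro ⟨μ, hμ1, hμ0, rfl⟩
    refine ⟨fun i => 2 * max (μ i) 0, fun i => 2 * max (-(μ i)) 0,
      ⟨fun i => mul_nonneg (by norm_num) (le_max_right _ _),
       ?_⟩,
      ⟨fun i => mul_nonneg (by norm_num) (le_max_right _ _), ?_⟩, ?_, ?_⟩
    · simp_rw [two_max_eq]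
      rw [Finset.sum_add_distrib, hμ0, hμ1]; ring
    · simp_rw [two_max_eq, abs_neg]
      rw [Finset.sum_add_distrib, hμ1]
      have : ∑ i, -μ i = 0 := by rw [Finset.sum_neg_distrib, hμ0]; ring
      rw [this]; ring
    · intro h
      have hz : ∀ i, μ i = 0 := by
        intro i
        have h2 := congrFun h i
        rw [show ((fun i => 2 * max (μ i) 0) i = (fun i => 2 * max (-(μ i)) 0) i)
            = (2 * max (μ i) 0 = 2 * max (-(μ i)) 0) from rfl,
          two_max_eq, two_max_eq, abs_neg] at h2
        linarith
      simp [hz] at hμ1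
    · have hd : ((fun i => 2 * max (μ i) 0) - fun i => 2 * max (-(μ i)) 0) = (2:ℝ) • μ := by
        funext i
        simp only [Pi.sub_apply, Pi.smul_apply, smul_eq_mul]
        rw [two_max_eq, two_max_eq, abs_neg]; ring
      have hnum : Matrix.vecMul (fun i => 2 * max (μ i) 0) A
            - Matrix.vecMul (fun i => 2 * max (-(μ i)) 0) A
          = (2:ℝ) • Matrix.vecMul μ A := by
        rw [← Matrix.sub_vecMul, hd, Matrix.smul_vecMul]
      have hnum2 : ∑ i, |(Matrix.vecMul (fun i => 2 * max (μ i) 0) A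
            - Matrix.vecMul (fun i => 2 * max (-(μ i)) 0) A) i|
          = 2 * ∑ i, |Matrix.vecMul μ A i| := by
        rw [hnum]
        have h3 : ∀ i, |((2:ℝ) • Matrix.vecMul μ A) i| = 2 * |Matrix.vecMul μ A i| := by
          intro i
          simp only [Pi.smul_apply, smul_eq_mul, abs_mul, abs_two]
        simp_rw [h3, ← Finset.mul_sum]
      have hden : ∑ i, |2 * max (μ i) 0 - 2 * max (-(μ i)) 0| = 2 := by
        have h : ∀ i, |2 * max (μ i) 0 - 2 * max (-(μ i)) 0| = 2 * |μ i| := by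
          intro i
          rw [two_max_eq, two_max_eq, abs_neg]
          rw [show μ i + |μ i| - (-μ i + |μ i|) = 2 * μ i by ring, abs_mul]
          norm_num
        simp_rw [h, ← Finset.mul_sum, hμ1]; norm_num
      rw [hnum2, hden]
      ring


/-- The ℓ¹ contraction rate of `ν ↦ νA` on probability vectors equals its operator norm
on the zero-sum hyperplane, and equals the contraction rate of `x ↦ Ax` with respect to
the diameter seminorm. -/
theorem stmt15 (n : ℕ) (A : Matrix (Fin n) (Fin n) ℝ)
    (hpos : ∀ i j, 0 ≤ A i j) (hrow : ∀ i, ∑ j, A i j = 1) :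
    sSup {r : ℝ | ∃ ν π : Fin n → ℝ,
        ((∀ i, 0 ≤ ν i) ∧ ∑ i, ν i = 1) ∧ ((∀ i, 0 ≤ π i) ∧ ∑ i, π i = 1) ∧ ν ≠ π ∧
        r = (∑ i, |(Matrix.vecMul ν A - Matrix.vecMul π A) i|) / (∑ i, |ν i - π i|)}
      = sSup {r : ℝ | ∃ ν : Fin n → ℝ, (∑ i, |ν i| = 1) ∧ (∑ i, ν i = 0) ∧
          r = ∑ i, |Matrix.vecMul ν A i|}
    ∧
    sSup {r : ℝ | ∃ ν π : Fin n → ℝ,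
        ((∀ i, 0 ≤ ν i) ∧ ∑ i, ν i = 1) ∧ ((∀ i, 0 ≤ π i) ∧ ∑ i, π i = 1) ∧ ν ≠ π ∧
        r = (∑ i, |(Matrix.vecMul ν A - Matrix.vecMul π A) i|) / (∑ i, |ν i - π i|)}
      = sSup {r : ℝ | ∃ x : Fin n → ℝ,
          (⨆ p : Fin n × Fin n, (x p.1 - x p.2)) ≠ 0 ∧
          r = (⨆ p : Fin n × Fin n, (A.mulVec x p.1 - A.mulVec x p.2)) /
              (⨆ p : Fin n × Fin n, (x p.1 - x p.2))} := by
  have hset := set_eq A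
  refine ⟨congrArg sSup hset, ?_⟩
  rw [hset]
  rcases lt_or_ge n 2 with hn | hn
  · -- degenerate cases n = 0, 1 : both sets empty
    have h2 : {r : ℝ | ∃ ν : Fin n → ℝ, (∑ i, |ν i| = 1) ∧ (∑ i, ν i = 0) ∧
          r = ∑ i, |Matrix.vecMul ν A i|} = ∅ := by
      ext r
      simp only [Set.mem_setOf_eq, Set.mem_empty_iff_false, iff_false, not_exists]
      rintro ν ⟨h1, h0, -⟩
      rcases (by omega : n = 0 ∨ n = 1) with rfl | rfl
      · simp at h1
      · rw [Fin.sum_univ_one] at h1 h0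
        rw [h0] at h1; simp at h1
    have h3 : {r : ℝ | ∃ x : Fin n → ℝ,
          (⨆ p : Fin n × Fin n, (x p.1 - x p.2)) ≠ 0 ∧
          r = (⨆ p : Fin n × Fin n, (A.mulVec x p.1 - A.mulVec x p.2)) /
              (⨆ p : Fin n × Fin n, (x p.1 - x p.2))} = ∅ := by
      ext r
      simp only [Set.mem_setOf_eq, Set.mem_empty_iff_false, iff_false, not_exists]
      rintro x ⟨hx, -⟩
      rcases (by omega : n = 0 ∨ n = 1) with rfl | rfl
      · exact hx (Real.iSup_of_isEmpty _)
      · refine hx ?_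
        have h : ∀ p : Fin 1 × Fin 1, x p.1 - x p.2 = 0 := fun p => by
          rw [Subsingleton.elim p.1 p.2]; ring
        simp only [h]
        exact ciSup_const
    rw [h2, h3]
  · -- main case n ≥ 2
    have hn0 : 0 < n := by omega
    haveI : NeZero n := ⟨by omega⟩
    obtain ⟨i0, j0, hij, hmax⟩ : ∃ i0 j0 : Fin n, i0 ≠ j0 ∧
        ∀ i j : Fin n, ∑ k, |A i k - A j k| ≤ ∑ k, |A i0 k - A j0 k| := by
      obtain ⟨p0, hp0⟩ :=
        Finite.exists_max (fun p : Fin n × Fin n => ∑ k, |A p.1 k - A p.2 k|)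
      rcases eq_or_ne p0.1 p0.2 with he | he
      · refine ⟨⟨0, by omega⟩, ⟨1, by omega⟩, by simp [Fin.ext_iff], fun i j => ?_⟩
        have h1 : ∑ k, |A p0.1 k - A p0.2 k| = 0 := by simp [he]
        have h2 : ∑ k, |A i k - A j k| ≤ ∑ k, |A p0.1 k - A p0.2 k| := hp0 (i, j)
        have h3 : (0:ℝ) ≤ ∑ k, |A (⟨0, by omega⟩ : Fin n) k - A (⟨1, by omega⟩ : Fin n) k| :=
          Finset.sum_nonneg fun k _ => abs_nonneg _
        linarith
      · exact ⟨p0.1, p0.2, he, fun i j => hp0 (i, j)⟩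
    have hDm0 : (0:ℝ) ≤ ∑ k, |A i0 k - A j0 k| :=
      Finset.sum_nonneg fun k _ => abs_nonneg _
    have hrz : ∀ i j : Fin n, ∑ k, (A i k - A j k) = 0 := by
      intro i j
      rw [Finset.sum_sub_distrib, hrow i, hrow j]; ring
    -- contraction bound for the diameter seminorm
    have hΔbdd : ∀ x : Fin n → ℝ,
        BddAbove (Set.range fun p : Fin n × Fin n => x p.1 - x p.2) := fun x =>
      (Set.finite_range _).bddAbove
    have hΔ0 : ∀ x : Fin n → ℝ, 0 ≤ ⨆ p : Fin n × Fin n, (x p.1 - x p.2) := by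
      intro x
      have := le_ciSup (hΔbdd x) (i0, i0)
      simpa using this
    have hcontr : ∀ x : Fin n → ℝ,
        (⨆ p : Fin n × Fin n, (A.mulVec x p.1 - A.mulVec x p.2))
          ≤ ((1/2) * ∑ k, |A i0 k - A j0 k|) * ⨆ p : Fin n × Fin n, (x p.1 - x p.2) := by
      intro x
      refine ciSup_le fun p => ?_
      have hmv : A.mulVec x p.1 - A.mulVec x p.2 = ∑ k, (A p.1 k - A p.2 k) * x k := by
        simp only [Matrix.mulVec, dotProduct, ← Finset.sum_sub_distrib]
        exact Finset.sum_congr rfl fun k _ => by ring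
      have hc0 : ∑ k, (A p.1 k - A p.2 k) = 0 := hrz p.1 p.2
      have hNnn : (0:ℝ) ≤ ∑ k, |A p.1 k - A p.2 k| :=
        Finset.sum_nonneg fun k _ => abs_nonneg _
      rcases eq_or_lt_of_le hNnn with hN0 | hNpos
      · have hall : ∀ k, A p.1 k - A p.2 k = 0 := by
          intro k
          have h := (Finset.sum_eq_zero_iff_of_nonneg
            (fun k _ => abs_nonneg (A p.1 k - A p.2 k))).mp hN0.symm k (Finset.mem_univ k)
          exact abs_eq_zero.mp h
        rw [hmv]
        have hz : ∑ k, (A p.1 k - A p.2 k) * x k = 0 :=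
          Finset.sum_eq_zero fun k _ => by rw [hall k]; ring
        rw [hz]
        exact mul_nonneg (by positivity) (hΔ0 x)
      · set N := ∑ k, |A p.1 k - A p.2 k| with hNdef
        have h1' : ∑ k, |N⁻¹ * (A p.1 k - A p.2 k)| = 1 := by
          have h : ∀ k, |N⁻¹ * (A p.1 k - A p.2 k)| = N⁻¹ * |A p.1 k - A p.2 k| := by
            intro k
            rw [abs_mul, abs_of_nonneg (inv_nonneg.mpr hNpos.le)]
          simp_rw [h, ← Finset.mul_sum]
          rw [← hNdef, inv_mul_cancel₀ hNpos.ne']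
        have h0' : ∑ k, N⁻¹ * (A p.1 k - A p.2 k) = 0 := by
          rw [← Finset.mul_sum, hc0, mul_zero]
        have hB := lemB hn0 (fun k => N⁻¹ * (A p.1 k - A p.2 k)) x h0' h1'
        have hB2 : N⁻¹ * ∑ k, (A p.1 k - A p.2 k) * x k
            ≤ (1/2) * ⨆ p : Fin n × Fin n, (x p.1 - x p.2) := by
          rw [Finset.mul_sum]
          refine le_trans (le_of_eq ?_) hB
          exact (Finset.sum_congr rfl fun k _ => by ring).symm
        have hS : ∑ k, (A p.1 k - A p.2 k) * x k
            ≤ N * ((1/2) * ⨆ p : Fin n × Fin n, (x p.1 - x p.2)) := by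
          calc ∑ k, (A p.1 k - A p.2 k) * x k
              = N * (N⁻¹ * ∑ k, (A p.1 k - A p.2 k) * x k) := by
                field_simp
            _ ≤ N * ((1/2) * ⨆ p : Fin n × Fin n, (x p.1 - x p.2)) :=
                mul_le_mul_of_nonneg_left hB2 hNpos.le
        rw [hmv]
        refine hS.trans ?_
        have hNle : N ≤ ∑ k, |A i0 k - A j0 k| := hmax p.1 p.2
        nlinarith [hΔ0 x]
    -- sSup of the zero-sum set
    have hub2 : ∀ r ∈ {r : ℝ | ∃ ν : Fin n → ℝ, (∑ i, |ν i| = 1) ∧ (∑ i, ν i = 0) ∧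
          r = ∑ i, |Matrix.vecMul ν A i|}, r ≤ (1/2) * ∑ k, |A i0 k - A j0 k| := by
      rintro r ⟨ν, h1, h0, rfl⟩
      exact lemA hn0 A ν h1 h0 i0 j0 hmax
    have hmem2 : ((1:ℝ)/2) * ∑ k, |A i0 k - A j0 k| ∈
        {r : ℝ | ∃ ν : Fin n → ℝ, (∑ i, |ν i| = 1) ∧ (∑ i, ν i = 0) ∧
          r = ∑ i, |Matrix.vecMul ν A i|} := by
      refine ⟨fun i => if i = i0 then (1/2 : ℝ) else if i = j0 then -(1/2) else 0, ?_, ?_, ?_⟩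
      · have h : ∀ i : Fin n, |if i = i0 then (1/2 : ℝ) else if i = j0 then -(1/2) else 0|
            = (if i = i0 then (1/2 : ℝ) else 0) + (if i = j0 then (1/2 : ℝ) else 0) := by
          intro i
          by_cases h1 : i = i0
          · subst h1; simp only [if_pos rfl, if_neg hij]; norm_num
          · by_cases h2 : i = j0
            · simp only [if_neg h1, if_pos h2]; norm_num
            · simp only [if_neg h1, if_neg h2]; norm_num
        simp_rw [h]
        rw [Finset.sum_add_distrib, Finset.sum_ite_eq' Finset.univ i0,
          Finset.sum_ite_eq' Finset.univ j0]
        simp only [Finset.mem_univ, if_true]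
        norm_num
      · have h : ∀ i : Fin n, (if i = i0 then (1/2 : ℝ) else if i = j0 then -(1/2) else 0)
            = (if i = i0 then (1/2 : ℝ) else 0) + (if i = j0 then -(1/2 : ℝ) else 0) := by
          intro i
          by_cases h1 : i = i0
          · subst h1; simp only [if_pos rfl, if_neg hij]; norm_num
          · by_cases h2 : i = j0
            · simp only [if_neg h1, if_pos h2]; norm_num
            · simp only [if_neg h1, if_neg h2]; norm_num
        simp_rw [h]
        rw [Finset.sum_add_distrib, Finset.sum_ite_eq' Finset.univ i0,
          Finset.sum_ite_eq' Finset.univ j0]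
        simp only [Finset.mem_univ, if_true]
        norm_num
      · have hv : ∀ jj, Matrix.vecMul
            (fun i => if i = i0 then (1/2 : ℝ) else if i = j0 then -(1/2) else 0) A jj
            = (1/2) * (A i0 jj - A j0 jj) := by
          intro jj
          have hvm : Matrix.vecMul
              (fun i => if i = i0 then (1/2 : ℝ) else if i = j0 then -(1/2) else 0) A jj
              = ∑ i, (if i = i0 then (1/2 : ℝ) else if i = j0 then -(1/2) else 0) * A i jj := by
            simp [Matrix.vecMul, dotProduct]
          rw [hvm]
          have h : ∀ i : Fin n,
              (if i = i0 then (1/2 : ℝ) else if i = j0 then -(1/2) else 0) * A i jj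
              = (if i = i0 then (1/2 : ℝ) * A i0 jj else 0)
                + (if i = j0 then -(1/2 : ℝ) * A j0 jj else 0) := by
            intro i
            by_cases h1 : i = i0
            · subst h1; simp only [if_pos rfl, if_neg hij, if_true]; norm_num
            · by_cases h2 : i = j0
              · simp only [if_neg h1, if_pos h2]; rw [h2]; ring
              · simp only [if_neg h1, if_neg h2]; ring
          simp_rw [h]
          rw [Finset.sum_add_distrib, Finset.sum_ite_eq' Finset.univ i0,
            Finset.sum_ite_eq' Finset.univ j0]
          simp; ring
        simp_rw [hv]
        have h : ∀ jj : Fin n, |(1/2 : ℝ) * (A i0 jj - A j0 jj)|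
            = (1/2) * |A i0 jj - A j0 jj| := by
          intro jj; rw [abs_mul]; norm_num
        simp_rw [h, ← Finset.mul_sum]
    have hS2 : sSup {r : ℝ | ∃ ν : Fin n → ℝ, (∑ i, |ν i| = 1) ∧ (∑ i, ν i = 0) ∧
          r = ∑ i, |Matrix.vecMul ν A i|} = (1/2) * ∑ k, |A i0 k - A j0 k| :=
      le_antisymm (csSup_le ⟨_, hmem2⟩ hub2)
        (le_csSup ⟨_, fun r hr => hub2 r hr⟩ hmem2)
    -- sSup of the diameter set
    have hub3 : ∀ r ∈ {r : ℝ | ∃ x : Fin n → ℝ,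
          (⨆ p : Fin n × Fin n, (x p.1 - x p.2)) ≠ 0 ∧
          r = (⨆ p : Fin n × Fin n, (A.mulVec x p.1 - A.mulVec x p.2)) /
              (⨆ p : Fin n × Fin n, (x p.1 - x p.2))},
        r ≤ (1/2) * ∑ k, |A i0 k - A j0 k| := by
      rintro r ⟨x, hx, rfl⟩
      have hxpos : 0 < ⨆ p : Fin n × Fin n, (x p.1 - x p.2) := (hΔ0 x).lt_of_ne' hx
      rw [div_le_iff₀ hxpos]
      exact hcontr x
    have hmem3 : ((1:ℝ)/2) * ∑ k, |A i0 k - A j0 k| ∈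
        {r : ℝ | ∃ x : Fin n → ℝ,
          (⨆ p : Fin n × Fin n, (x p.1 - x p.2)) ≠ 0 ∧
          r = (⨆ p : Fin n × Fin n, (A.mulVec x p.1 - A.mulVec x p.2)) /
              (⨆ p : Fin n × Fin n, (x p.1 - x p.2))} := by
      rcases eq_or_lt_of_le hDm0 with hz | hpos
      · -- all rows equal: the value is 0
        refine ⟨fun k => if k = i0 then 1 else 0, ?_, ?_⟩
        · have h1 : (1:ℝ) ≤ ⨆ p : Fin n × Fin n, ((fun k => if k = i0 then (1:ℝ) else 0) p.1
              - (fun k => if k = i0 then (1:ℝ) else 0) p.2) := by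
            have := le_ciSup (hΔbdd (fun k => if k = i0 then (1:ℝ) else 0)) (i0, j0)
            simp only [if_pos rfl, if_neg (Ne.symm hij)] at this
            simpa using this
          intro h
          rw [h] at h1
          norm_num at h1
        · have hAx0 : (⨆ p : Fin n × Fin n,
              (A.mulVec (fun k => if k = i0 then (1:ℝ) else 0) p.1
              - A.mulVec (fun k => if k = i0 then (1:ℝ) else 0) p.2)) = 0 := by
            refine le_antisymm ?_ ?_
            · have := hcontr (fun k => if k = i0 then (1:ℝ) else 0)
              rw [← hz] at this
              simpa using this
            · have := le_ciSup (hΔbdd (A.mulVec (fun k => if k = i0 then (1:ℝ) else 0))) (i0, i0)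
              simpa using this
          rw [hAx0, ← hz]
          norm_num
      · -- δ > 0 : use the sign vector of the maximizing row difference
        have hex : ∃ k, A i0 k - A j0 k ≠ 0 := by
          by_contra h
          push_neg at h
          have : ∑ k, |A i0 k - A j0 k| = 0 :=
            Finset.sum_eq_zero fun k _ => by rw [h k]; simp
          rw [← this] at hpos
          exact lt_irrefl _ hpos
        obtain ⟨⟨kp, hkp⟩, ⟨kn, hkn⟩⟩ :=
          exists_pos_neg (fun k => A i0 k - A j0 k) (hrz i0 j0) hex
        set x : Fin n → ℝ := fun k => if 0 ≤ A i0 k - A j0 k then 1 else -1 with hxdef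
        have hxb : ∀ k, -1 ≤ x k ∧ x k ≤ 1 := by
          intro k
          by_cases h : 0 ≤ A i0 k - A j0 k
          · simp only [hxdef, if_pos h]; norm_num
          · simp only [hxdef, if_neg h]; norm_num
        have hΔx : (⨆ p : Fin n × Fin n, (x p.1 - x p.2)) = 2 := by
          refine le_antisymm (ciSup_le fun p => ?_) ?_
          · have h1 := hxb p.1
            have h2 := hxb p.2
            linarith [h1.2, h2.1]
          · have hxkp : x kp = 1 := by simp only [hxdef, if_pos hkp.le]
            have hxkn : x kn = -1 := by simp only [hxdef, if_neg (not_le.mpr hkn)]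
            have := le_ciSup (hΔbdd x) (kp, kn)
            simp only at this
            rw [hxkp, hxkn] at this
            linarith
        have hAx : A.mulVec x i0 - A.mulVec x j0 = ∑ k, |A i0 k - A j0 k| := by
          have hmv : A.mulVec x i0 - A.mulVec x j0 = ∑ k, (A i0 k - A j0 k) * x k := by
            simp only [Matrix.mulVec, dotProduct, ← Finset.sum_sub_distrib]
            exact Finset.sum_congr rfl fun k _ => by ring
          rw [hmv]
          refine Finset.sum_congr rfl fun k _ => ?_
          by_cases h : 0 ≤ A i0 k - A j0 k
          · simp only [hxdef, if_pos h]; rw [abs_of_nonneg h]; ring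
          · simp only [hxdef, if_neg h]
            rw [abs_of_neg (not_le.mp h)]; ring
        have hΔAx : (⨆ p : Fin n × Fin n, (A.mulVec x p.1 - A.mulVec x p.2))
            = ∑ k, |A i0 k - A j0 k| := by
          refine le_antisymm ?_ ?_
          · have := hcontr x
            rw [hΔx] at this
            calc (⨆ p : Fin n × Fin n, (A.mulVec x p.1 - A.mulVec x p.2))
                ≤ ((1/2) * ∑ k, |A i0 k - A j0 k|) * 2 := this
              _ = ∑ k, |A i0 k - A j0 k| := by ring
          · have := le_ciSup (hΔbdd (A.mulVec x)) (i0, j0)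
            simp only at this
            rw [hAx] at this
            exact this
        exact ⟨x, by rw [hΔx]; norm_num, by rw [hΔAx, hΔx]; ring⟩
    have hS3 : sSup {r : ℝ | ∃ x : Fin n → ℝ,
          (⨆ p : Fin n × Fin n, (x p.1 - x p.2)) ≠ 0 ∧
          r = (⨆ p : Fin n × Fin n, (A.mulVec x p.1 - A.mulVec x p.2)) /
              (⨆ p : Fin n × Fin n, (x p.1 - x p.2))} = (1/2) * ∑ k, |A i0 k - A j0 k| :=
      le_antisymm (csSup_le ⟨_, hmem3⟩ hub3)
        (le_csSup ⟨_, fun r hr => hub3 r hr⟩ hmem3)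
    rw [hS2, hS3]
end

section
/- Let A be a row-stochastic n×n matrix with δ(A) < 1, where δ(A) = (1/2)·max_{i,j} Σ_s |A_{is} − A_{js}|. Then there exists a probability vector π such that for every x ∈ R^n and every k, ||A^k x − ⟨π, x⟩·1||_∞ ≤ δ(A)^k · Δ(x). In particular the iterates A^k x converge geometrically to the consensus state ⟨π,x⟩·1. -/
open Finset Filter Topology

/-- Geometric convergence to consensus: if the Doeblin coefficient of a row-stochastic
matrix is `< 1`, the iterates converge geometrically to a rank-one projection. -/
theorem stmt18 (n : ℕ) (hn : 0 < n) (A : Matrix (Fin n) (Fin n) ℝ)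
    (hpos : ∀ i j, 0 ≤ A i j) (hrow : ∀ i, ∑ j, A i j = 1)
    (hδ : (1 / 2) * sSup {s : ℝ | ∃ i j : Fin n, s = ∑ u, |A i u - A j u|} < 1) :
    ∃ π : Fin n → ℝ, (∀ i, 0 ≤ π i) ∧ ∑ i, π i = 1 ∧
      ∀ (x : Fin n → ℝ) (k : ℕ),
        ‖(A ^ k).mulVec x - (∑ i, π i * x i) • (1 : Fin n → ℝ)‖ ≤
          ((1 / 2) * sSup {s : ℝ | ∃ i j : Fin n, s = ∑ u, |A i u - A j u|}) ^ k *
            (⨆ p : Fin n × Fin n, (x p.1 - x p.2)) := by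
  classical
  haveI : Nonempty (Fin n) := ⟨⟨0, hn⟩⟩
  set S : Set ℝ := {s : ℝ | ∃ i j : Fin n, s = ∑ u, |A i u - A j u|} with hS
  have hSrange : S = Set.range (fun p : Fin n × Fin n => ∑ u, |A p.1 u - A p.2 u|) := by
    ext s
    constructor
    · rintro ⟨i, j, rfl⟩; exact ⟨(i, j), rfl⟩
    · rintro ⟨⟨i, j⟩, rfl⟩; exact ⟨i, j, rfl⟩
  have hSbdd : BddAbove S := (hSrange ▸ Set.finite_range _).bddAbove
  set δ : ℝ := (1 / 2) * sSup S with hδdef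
  have hD0 : (0 : ℝ) ≤ sSup S := le_csSup hSbdd ⟨⟨0, hn⟩, ⟨0, hn⟩, by simp⟩
  have hδ0 : 0 ≤ δ := by positivity
  have hδ1 : δ < 1 := hδ
  -- max and min of a vector
  set Mx : (Fin n → ℝ) → ℝ := fun y => Finset.univ.sup' Finset.univ_nonempty y with hMx
  set mn : (Fin n → ℝ) → ℝ := fun y => Finset.univ.inf' Finset.univ_nonempty y with hmn
  have hmle : ∀ y : Fin n → ℝ, ∀ i, mn y ≤ y i := fun y i =>
    Finset.inf'_le _ (Finset.mem_univ i)
  have hMge : ∀ y : Fin n → ℝ, ∀ i, y i ≤ Mx y := fun y i =>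
    Finset.le_sup' _ (Finset.mem_univ i)
  have hmM : ∀ y : Fin n → ℝ, mn y ≤ Mx y := fun y =>
    le_trans (hmle y ⟨0, hn⟩) (hMge y ⟨0, hn⟩)
  -- one step of A keeps coordinates within [mn y, Mx y]
  have hAup : ∀ y : Fin n → ℝ, ∀ i, A.mulVec y i ≤ Mx y := by
    intro y i
    have hmv : A.mulVec y i = ∑ u, A i u * y u := rfl
    calc A.mulVec y i = ∑ u, A i u * y u := hmv
      _ ≤ ∑ u, A i u * Mx y :=
        Finset.sum_le_sum fun u _ => mul_le_mul_of_nonneg_left (hMge y u) (hpos i u)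
      _ = (∑ u, A i u) * Mx y := by rw [Finset.sum_mul]
      _ = Mx y := by rw [hrow i, one_mul]
  have hAlo : ∀ y : Fin n → ℝ, ∀ i, mn y ≤ A.mulVec y i := by
    intro y i
    have hmv : A.mulVec y i = ∑ u, A i u * y u := rfl
    calc mn y = (∑ u, A i u) * mn y := by rw [hrow i, one_mul]
      _ = ∑ u, A i u * mn y := by rw [Finset.sum_mul]
      _ ≤ ∑ u, A i u * y u :=
        Finset.sum_le_sum fun u _ => mul_le_mul_of_nonneg_left (hmle y u) (hpos i u)
      _ = A.mulVec y i := hmv.symm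
  -- contraction of the spread
  have hcontr : ∀ y : Fin n → ℝ, ∀ i j, A.mulVec y i - A.mulVec y j ≤ δ * (Mx y - mn y) := by
    intro y i j
    set c : ℝ := (Mx y + mn y) / 2 with hc
    have hzero : ∑ u, (A i u - A j u) = 0 := by
      rw [Finset.sum_sub_distrib, hrow i, hrow j, sub_self]
    have h1 : A.mulVec y i - A.mulVec y j = ∑ u, (A i u - A j u) * (y u - c) := by
      have e1 : ∑ u, (A i u - A j u) * (y u - c)
          = (∑ u, (A i u - A j u) * y u) - (∑ u, (A i u - A j u)) * c := by
        rw [Finset.sum_mul, ← Finset.sum_sub_distrib]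
        exact Finset.sum_congr rfl fun u _ => by ring
      rw [e1, hzero, zero_mul, sub_zero]
      simp only [Matrix.mulVec, dotProduct]
      rw [← Finset.sum_sub_distrib]
      exact Finset.sum_congr rfl fun u _ => by ring
    have h2 : ∀ u, (A i u - A j u) * (y u - c) ≤ |A i u - A j u| * ((Mx y - mn y) / 2) := by
      intro u
      have habs : |y u - c| ≤ (Mx y - mn y) / 2 := by
        rw [abs_le]
        constructor
        · have := hmle y u; rw [hc]; linarith [hmM y]
        · have := hMge y u; rw [hc]; linarith [hmM y]
      calc (A i u - A j u) * (y u - c) ≤ |(A i u - A j u) * (y u - c)| := le_abs_self _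
        _ = |A i u - A j u| * |y u - c| := abs_mul _ _
        _ ≤ |A i u - A j u| * ((Mx y - mn y) / 2) :=
            mul_le_mul_of_nonneg_left habs (abs_nonneg _)
    have h3 : (∑ u, |A i u - A j u|) ≤ sSup S := le_csSup hSbdd ⟨i, j, rfl⟩
    calc A.mulVec y i - A.mulVec y j = ∑ u, (A i u - A j u) * (y u - c) := h1
      _ ≤ ∑ u, |A i u - A j u| * ((Mx y - mn y) / 2) := Finset.sum_le_sum fun u _ => h2 u
      _ = (∑ u, |A i u - A j u|) * ((Mx y - mn y) / 2) := by rw [Finset.sum_mul]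
      _ ≤ sSup S * ((Mx y - mn y) / 2) :=
          mul_le_mul_of_nonneg_right h3 (by linarith [hmM y])
      _ = δ * (Mx y - mn y) := by rw [hδdef]; ring
  -- the iteration
  have hvs : ∀ (x : Fin n → ℝ) (k : ℕ),
      (A ^ (k + 1)).mulVec x = A.mulVec ((A ^ k).mulVec x) := by
    intro x k
    rw [pow_succ', Matrix.mulVec_mulVec]
  have hv0 : ∀ x : Fin n → ℝ, (A ^ 0).mulVec x = x := by
    intro x; rw [pow_zero, Matrix.one_mulVec]
  have hMstep : ∀ (x : Fin n → ℝ) (k : ℕ), Mx ((A ^ (k + 1)).mulVec x) ≤ Mx ((A ^ k).mulVec x) := by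
    intro x k
    refine Finset.sup'_le _ _ fun i _ => ?_
    rw [hvs]; exact hAup _ i
  have hmstep : ∀ (x : Fin n → ℝ) (k : ℕ), mn ((A ^ k).mulVec x) ≤ mn ((A ^ (k + 1)).mulVec x) := by
    intro x k
    refine Finset.le_inf' _ _ fun i _ => ?_
    rw [hvs]; exact hAlo _ i
  have hManti : ∀ x : Fin n → ℝ, Antitone (fun k => Mx ((A ^ k).mulVec x)) := fun x =>
    antitone_nat_of_succ_le (hMstep x)
  have hmmono : ∀ x : Fin n → ℝ, Monotone (fun k => mn ((A ^ k).mulVec x)) := fun x =>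
    monotone_nat_of_le_succ (hmstep x)
  have hgap : ∀ (x : Fin n → ℝ) (k : ℕ),
      Mx ((A ^ k).mulVec x) - mn ((A ^ k).mulVec x) ≤ δ ^ k * (Mx x - mn x) := by
    intro x k
    induction k with
    | zero => rw [hv0, pow_zero, one_mul]
    | succ k ih =>
      obtain ⟨i, -, hi⟩ := Finset.exists_mem_eq_sup' Finset.univ_nonempty ((A ^ (k + 1)).mulVec x)
      obtain ⟨j, -, hj⟩ := Finset.exists_mem_eq_inf' Finset.univ_nonempty ((A ^ (k + 1)).mulVec x)
      have hc := hcontr ((A ^ k).mulVec x) i j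
      rw [← hvs] at hc
      calc Mx ((A ^ (k + 1)).mulVec x) - mn ((A ^ (k + 1)).mulVec x)
          = (A ^ (k + 1)).mulVec x i - (A ^ (k + 1)).mulVec x j := by
            rw [hMx, hmn]; simp only [hi, hj]
        _ ≤ δ * (Mx ((A ^ k).mulVec x) - mn ((A ^ k).mulVec x)) := hc
        _ ≤ δ * (δ ^ k * (Mx x - mn x)) := mul_le_mul_of_nonneg_left ih hδ0
        _ = δ ^ (k + 1) * (Mx x - mn x) := by rw [pow_succ]; ring
  -- the limit functional
  set L : (Fin n → ℝ) → ℝ := fun x => ⨆ k, mn ((A ^ k).mulVec x) with hL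
  have hbdd : ∀ x : Fin n → ℝ, BddAbove (Set.range fun k => mn ((A ^ k).mulVec x)) := by
    intro x
    refine ⟨Mx ((A ^ 0).mulVec x), ?_⟩
    rintro - ⟨k, rfl⟩
    exact le_trans (hmM _) (hManti x (Nat.zero_le k))
  have hmL : ∀ (x : Fin n → ℝ) (k : ℕ), mn ((A ^ k).mulVec x) ≤ L x := fun x k =>
    le_ciSup (hbdd x) k
  have hLM : ∀ (x : Fin n → ℝ) (k : ℕ), L x ≤ Mx ((A ^ k).mulVec x) := by
    intro x k
    refine ciSup_le fun j => ?_
    rcases le_total j k with h | h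
    · exact le_trans (hmmono x h) (hmM _)
    · exact le_trans (hmM _) (hManti x h)
  have hcoord : ∀ (x : Fin n → ℝ) (k : ℕ) (i : Fin n),
      |(A ^ k).mulVec x i - L x| ≤ δ ^ k * (Mx x - mn x) := by
    intro x k i
    have h1 := hmle ((A ^ k).mulVec x) i
    have h2 := hMge ((A ^ k).mulVec x) i
    have h3 := hmL x k
    have h4 := hLM x k
    have h5 := hgap x k
    rw [abs_le]
    constructor <;> linarith
  -- convergence of coordinates
  have htendm : ∀ x : Fin n → ℝ, Tendsto (fun k => mn ((A ^ k).mulVec x)) atTop (𝓝 (L x)) :=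
    fun x => tendsto_atTop_ciSup (hmmono x) (hbdd x)
  have hgap0 : ∀ x : Fin n → ℝ,
      Tendsto (fun k => Mx ((A ^ k).mulVec x) - mn ((A ^ k).mulVec x)) atTop (𝓝 0) := by
    intro x
    have hpow : Tendsto (fun k : ℕ => δ ^ k * (Mx x - mn x)) atTop (𝓝 0) := by
      have := (tendsto_pow_atTop_nhds_zero_of_lt_one hδ0 hδ1).mul_const (Mx x - mn x)
      simpa using this
    exact squeeze_zero (fun k => by linarith [hmM ((A ^ k).mulVec x)]) (fun k => hgap x k) hpow
  have htendcoord : ∀ (x : Fin n → ℝ) (i : Fin n),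
      Tendsto (fun k => (A ^ k).mulVec x i) atTop (𝓝 (L x)) := by
    intro x i
    refine tendsto_of_tendsto_of_tendsto_of_le_of_le (htendm x) ?_
      (fun k => hmle ((A ^ k).mulVec x) i) (fun k => hMge ((A ^ k).mulVec x) i)
    have := (hgap0 x).add (htendm x)
    simpa using this
  -- the stationary vector
  set π : Fin n → ℝ := fun j => L (Pi.single j 1) with hπ
  have hentry : ∀ (j i : Fin n), Tendsto (fun k => (A ^ k) i j) atTop (𝓝 (π j)) := by
    intro j i
    have := htendcoord (Pi.single j 1) i
    simpa [Matrix.mulVec_single] using this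
  have hppos : ∀ (k : ℕ) (i j : Fin n), 0 ≤ (A ^ k) i j := by
    intro k
    induction k with
    | zero => intro i j; by_cases h : i = j <;> simp [Matrix.one_apply, h]
    | succ k ih =>
      intro i j
      rw [pow_succ, Matrix.mul_apply]
      exact Finset.sum_nonneg fun u _ => mul_nonneg (ih i u) (hpos u j)
  have hprow : ∀ (k : ℕ) (i : Fin n), ∑ j, (A ^ k) i j = 1 := by
    intro k
    induction k with
    | zero => intro i; simp [Matrix.one_apply]
    | succ k ih =>
      intro i
      rw [pow_succ]
      simp only [Matrix.mul_apply]
      calc ∑ j, ∑ u, (A ^ k) i u * A u j = ∑ u, ∑ j, (A ^ k) i u * A u j := Finset.sum_comm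
        _ = ∑ u, (A ^ k) i u * ∑ j, A u j := by
            exact Finset.sum_congr rfl fun u _ => by rw [Finset.mul_sum]
        _ = 1 := by simp only [hrow, mul_one]; exact ih i
  have hπpos : ∀ j, 0 ≤ π j := fun j =>
    ge_of_tendsto' (hentry j ⟨0, hn⟩) fun k => hppos k ⟨0, hn⟩ j
  have hπsum : ∑ j, π j = 1 := by
    have h1 : Tendsto (fun k => ∑ j, (A ^ k) ⟨0, hn⟩ j) atTop (𝓝 (∑ j, π j)) :=
      tendsto_finset_sum _ fun j _ => hentry j ⟨0, hn⟩
    have h2 : (fun k => ∑ j, (A ^ k) ⟨0, hn⟩ j) = fun _ => (1 : ℝ) :=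
      funext fun k => hprow k _
    rw [h2] at h1
    exact tendsto_nhds_unique h1 tendsto_const_nhds
  have hLlin : ∀ x : Fin n → ℝ, L x = ∑ j, π j * x j := by
    intro x
    have h1 : Tendsto (fun k => (A ^ k).mulVec x ⟨0, hn⟩) atTop (𝓝 (L x)) := htendcoord x _
    have h2 : Tendsto (fun k => (A ^ k).mulVec x ⟨0, hn⟩) atTop (𝓝 (∑ j, π j * x j)) := by
      have he : ∀ k : ℕ, (A ^ k).mulVec x ⟨0, hn⟩ = ∑ j, (A ^ k) ⟨0, hn⟩ j * x j := fun k => rfl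
      simp only [he]
      exact tendsto_finset_sum _ fun j _ => (hentry j _).mul_const (x j)
    exact tendsto_nhds_unique h1 h2
  -- the iSup equals the spread
  have hQ : ∀ x : Fin n → ℝ, (⨆ p : Fin n × Fin n, (x p.1 - x p.2)) = Mx x - mn x := by
    intro x
    apply le_antisymm
    · refine ciSup_le fun p => ?_
      have h1 := hMge x p.1
      have h2 := hmle x p.2
      linarith
    · obtain ⟨i, -, hi⟩ := Finset.exists_mem_eq_sup' Finset.univ_nonempty x
      obtain ⟨j, -, hj⟩ := Finset.exists_mem_eq_inf' Finset.univ_nonempty x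
      rw [hMx, hmn]
      simp only [hi, hj]
      exact le_ciSup (f := fun p : Fin n × Fin n => x p.1 - x p.2)
        (Set.Finite.bddAbove (Set.finite_range _)) (i, j)
  -- conclusion
  refine ⟨π, hπpos, hπsum, fun x k => ?_⟩
  rw [hQ x]
  have hrhs : 0 ≤ δ ^ k * (Mx x - mn x) :=
    mul_nonneg (pow_nonneg hδ0 k) (by linarith [hmM x])
  refine (pi_norm_le_iff_of_nonneg hrhs).2 fun i => ?_
  simp only [Pi.sub_apply, Pi.smul_apply, Pi.one_apply, smul_eq_mul, mul_one, Real.norm_eq_abs]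
  rw [← hLlin x]
  exact hcoord x k i
end

section
/- Let Φ(X) = Σ_{i=1}^m V_i* X V_i be a completely positive unital map on Hermitian n×n matrices (so Σ V_i* V_i = I_n). Then the contraction rate ||Φ||_H = sup{(λ_max(Φ(X)) − λ_min(Φ(X)))/(λ_max(X) − λ_min(X)) : X Hermitian, λ_max(X) ≠ λ_min(X)} equals 1 if and only if there exist nonzero vectors u, v ∈ C^n such that ⟨V_i u, V_j v⟩ = 0 for all i, j ∈ {1,...,m}. -/
open scoped Matrix ComplexOrder
open Matrix

namespace Stmt19Aux


variable {n m : ℕ}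

/-- squared norm of a vector -/
noncomputable def nsq (x : Fin n → ℂ) : ℝ := ∑ i, Complex.normSq (x i)

lemma starDot_eq (x : Fin n → ℂ) : star x ⬝ᵥ x = ((nsq x : ℝ) : ℂ) := by
  simp [dotProduct, nsq, Pi.star_apply, Complex.normSq_eq_conj_mul_self]

lemma nsq_nonneg (x : Fin n → ℂ) : 0 ≤ nsq x :=
  Finset.sum_nonneg fun i _ => Complex.normSq_nonneg _

lemma nsq_eq_zero_iff (x : Fin n → ℂ) : nsq x = 0 ↔ x = 0 := by
  constructor
  · intro h
    funext i
    have := (Finset.sum_eq_zero_iff_of_nonneg (fun i _ => Complex.normSq_nonneg (x i))).1 h i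
      (Finset.mem_univ i)
    simpa using Complex.normSq_eq_zero.1 this
  · intro h; simp [h, nsq]

lemma nsq_one_of_unit {x : Fin n → ℂ} (h : star x ⬝ᵥ x = 1) : nsq x = 1 := by
  have h2 := starDot_eq x
  rw [h] at h2
  exact_mod_cast h2.symm

lemma nsq_smul (c : ℂ) (x : Fin n → ℂ) : nsq (c • x) = Complex.normSq c * nsq x := by
  simp [nsq, Finset.mul_sum, Complex.normSq_mul]

lemma exists_unit_scaled {x : Fin n → ℂ} (hx : x ≠ 0) :
    ∃ c : ℂ, c ≠ 0 ∧ nsq (c • x) = 1 := by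
  have hpos : 0 < nsq x := lt_of_le_of_ne (nsq_nonneg x) (fun h => hx ((nsq_eq_zero_iff x).1 h.symm))
  refine ⟨(((Real.sqrt (nsq x))⁻¹ : ℝ) : ℂ), ?_, ?_⟩
  · simp only [ne_eq, Complex.ofReal_eq_zero, inv_eq_zero]
    exact fun h => absurd (Real.sqrt_eq_zero'.1 h) (by linarith)
  · rw [nsq_smul, Complex.normSq_ofReal]
    rw [← Real.sqrt_inv, Real.mul_self_sqrt (by positivity)]
    field_simp

/-- quadratic form -/
noncomputable def qf (A : Matrix (Fin n) (Fin n) ℂ) (x : Fin n → ℂ) : ℝ :=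
  (star x ⬝ᵥ A *ᵥ x).re

lemma qf_complex {A : Matrix (Fin n) (Fin n) ℂ} (hA : A.IsHermitian) (x : Fin n → ℂ) :
    star x ⬝ᵥ A *ᵥ x = ((qf A x : ℝ) : ℂ) := by
  have hself : star (star x ⬝ᵥ A *ᵥ x) = star x ⬝ᵥ A *ᵥ x := by
    conv_lhs => rw [← star_dotProduct, star_mulVec, hA.eq, ← dotProduct_mulVec]
  rw [qf]
  exact (Complex.conj_eq_iff_re.mp hself).symm

lemma spectral_quad {A : Matrix (Fin n) (Fin n) ℂ} (hA : A.IsHermitian) (x : Fin n → ℂ) :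
    ∃ y : Fin n → ℂ, nsq y = nsq x ∧
      qf A x = ∑ i, hA.eigenvalues i * Complex.normSq (y i) := by
  set U : Matrix (Fin n) (Fin n) ℂ := (hA.eigenvectorUnitary : Matrix (Fin n) (Fin n) ℂ) with hU
  have hUU : U * star U = 1 := (Matrix.mem_unitaryGroup_iff).mp hA.eigenvectorUnitary.2
  have h1 : star (star U *ᵥ x) = star x ᵥ* U := by
    rw [star_mulVec, star_eq_conjTranspose, conjTranspose_conjTranspose]
  refine ⟨star U *ᵥ x, ?_, ?_⟩
  · have h2 : star (star U *ᵥ x) ⬝ᵥ (star U *ᵥ x) = star x ⬝ᵥ x := by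
      rw [h1, ← dotProduct_mulVec, mulVec_mulVec, hUU, one_mulVec]
    have := congrArg Complex.re ((starDot_eq _).symm.trans (h2.trans (starDot_eq x)))
    simpa using this
  · have expand : star x ⬝ᵥ A *ᵥ x
        = star (star U *ᵥ x) ⬝ᵥ (diagonal (RCLike.ofReal ∘ hA.eigenvalues) *ᵥ (star U *ᵥ x)) := by
      conv_lhs => rw [hA.spectral_theorem, Unitary.conjStarAlgAut_apply, ← hU, ← mulVec_mulVec, ← mulVec_mulVec]
      rw [h1, ← dotProduct_mulVec]
    rw [qf, expand, dotProduct, Complex.re_sum]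
    refine Finset.sum_congr rfl fun i _ => ?_
    rw [mulVec_diagonal]
    have : star (star U *ᵥ x) i * ((RCLike.ofReal ∘ hA.eigenvalues) i * (star U *ᵥ x) i)
        = ((hA.eigenvalues i * Complex.normSq ((star U *ᵥ x) i) : ℝ) : ℂ) := by
      push_cast
      rw [Complex.normSq_eq_conj_mul_self]
      simp only [Pi.star_apply, Function.comp_apply, RCLike.ofReal_alg]
      ring_nf
      simp [Complex.real_smul]
      ring
    rw [this, Complex.ofReal_re]

lemma qf_le_lmax {A : Matrix (Fin n) (Fin n) ℂ} (hA : A.IsHermitian) (hn : 0 < n)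
    (x : Fin n → ℂ) : qf A x ≤ (⨆ i, hA.eigenvalues i) * nsq x := by
  have : Nonempty (Fin n) := ⟨⟨0, hn⟩⟩
  obtain ⟨y, hy, hq⟩ := spectral_quad hA x
  rw [hq, ← hy, nsq, Finset.mul_sum]
  refine Finset.sum_le_sum fun i _ => ?_
  exact mul_le_mul_of_nonneg_right
    (le_ciSup (Set.Finite.bddAbove (Set.finite_range _)) i) (Complex.normSq_nonneg _)

lemma lmin_le_qf {A : Matrix (Fin n) (Fin n) ℂ} (hA : A.IsHermitian) (hn : 0 < n)
    (x : Fin n → ℂ) : (⨅ i, hA.eigenvalues i) * nsq x ≤ qf A x := by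
  have : Nonempty (Fin n) := ⟨⟨0, hn⟩⟩
  obtain ⟨y, hy, hq⟩ := spectral_quad hA x
  rw [hq, ← hy, nsq, Finset.mul_sum]
  refine Finset.sum_le_sum fun i _ => ?_
  exact mul_le_mul_of_nonneg_right
    (ciInf_le (Set.Finite.bddBelow (Set.finite_range _)) i) (Complex.normSq_nonneg _)

lemma exists_lmax_vec {A : Matrix (Fin n) (Fin n) ℂ} (hA : A.IsHermitian) (hn : 0 < n) :
    ∃ x : Fin n → ℂ, star x ⬝ᵥ x = 1 ∧
      A *ᵥ x = (⨆ i, hA.eigenvalues i) • x := by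
  have : Nonempty (Fin n) := ⟨⟨0, hn⟩⟩
  obtain ⟨j, hj⟩ := Finite.exists_max hA.eigenvalues
  have hsup : (⨆ i, hA.eigenvalues i) = hA.eigenvalues j :=
    le_antisymm (ciSup_le hj) (le_ciSup (Set.Finite.bddAbove (Set.finite_range _)) j)
  refine ⟨⇑(hA.eigenvectorBasis j), ?_, ?_⟩
  · have h1 : (inner ℂ (hA.eigenvectorBasis j) (hA.eigenvectorBasis j) : ℂ) = 1 := by
      rw [inner_self_eq_norm_sq_to_K, hA.eigenvectorBasis.orthonormal.1 j]
      norm_num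
    rw [EuclideanSpace.inner_eq_star_dotProduct, dotProduct_comm] at h1
    exact h1
  · rw [hsup]
    simpa using hA.mulVec_eigenvectorBasis j

lemma exists_lmin_vec {A : Matrix (Fin n) (Fin n) ℂ} (hA : A.IsHermitian) (hn : 0 < n) :
    ∃ x : Fin n → ℂ, star x ⬝ᵥ x = 1 ∧
      A *ᵥ x = (⨅ i, hA.eigenvalues i) • x := by
  have : Nonempty (Fin n) := ⟨⟨0, hn⟩⟩
  obtain ⟨j, hj⟩ := Finite.exists_min hA.eigenvalues
  have hinf : (⨅ i, hA.eigenvalues i) = hA.eigenvalues j :=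
    le_antisymm (ciInf_le (Set.Finite.bddBelow (Set.finite_range _)) j) (le_ciInf hj)
  refine ⟨⇑(hA.eigenvectorBasis j), ?_, ?_⟩
  · have h1 : (inner ℂ (hA.eigenvectorBasis j) (hA.eigenvectorBasis j) : ℂ) = 1 := by
      rw [inner_self_eq_norm_sq_to_K, hA.eigenvectorBasis.orthonormal.1 j]
      norm_num
    rw [EuclideanSpace.inner_eq_star_dotProduct, dotProduct_comm] at h1
    exact h1
  · rw [hinf]
    simpa using hA.mulVec_eigenvectorBasis j

lemma qf_eigen {A : Matrix (Fin n) (Fin n) ℂ} {x : Fin n → ℂ} {r : ℝ}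
    (hx : star x ⬝ᵥ x = 1) (h : A *ᵥ x = r • x) : qf A x = r := by
  rw [qf, h, dotProduct_smul, hx]
  simp

lemma lmin_le_lmax {A : Matrix (Fin n) (Fin n) ℂ} (hA : A.IsHermitian) (hn : 0 < n) :
    (⨅ i, hA.eigenvalues i) ≤ ⨆ i, hA.eigenvalues i := by
  have : Nonempty (Fin n) := ⟨⟨0, hn⟩⟩
  have i0 : Fin n := ⟨0, hn⟩
  exact le_trans (ciInf_le (Set.Finite.bddBelow (Set.finite_range _)) i0)
    (le_ciSup (Set.Finite.bddAbove (Set.finite_range _)) i0)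

lemma dot_sum {v : Fin n → ℂ} (f : Fin m → Fin n → ℂ) :
    v ⬝ᵥ (∑ i, f i) = ∑ i, v ⬝ᵥ f i := by
  simp only [dotProduct, Finset.sum_apply, Finset.mul_sum]
  rw [Finset.sum_comm]

lemma sum_mulVec' (M : Fin m → Matrix (Fin n) (Fin n) ℂ) (x : Fin n → ℂ) :
    (∑ i, M i) *ᵥ x = ∑ i, (M i *ᵥ x) := by
  funext j
  simp only [Matrix.mulVec, dotProduct, Matrix.sum_apply, Finset.sum_mul,
    Finset.sum_apply]
  rw [Finset.sum_comm]

lemma phi_quad (V : Fin m → Matrix (Fin n) (Fin n) ℂ) (X : Matrix (Fin n) (Fin n) ℂ)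
    (x : Fin n → ℂ) :
    star x ⬝ᵥ (∑ i, (V i)ᴴ * X * V i) *ᵥ x
      = ∑ i, star (V i *ᵥ x) ⬝ᵥ (X *ᵥ (V i *ᵥ x)) := by
  rw [sum_mulVec' (fun i => (V i)ᴴ * X * V i), dot_sum]
  refine Finset.sum_congr rfl fun i _ => ?_
  rw [← mulVec_mulVec, ← mulVec_mulVec, dotProduct_mulVec, ← star_mulVec]

lemma phi_qf (V : Fin m → Matrix (Fin n) (Fin n) ℂ) (X : Matrix (Fin n) (Fin n) ℂ)
    (x : Fin n → ℂ) :
    qf (∑ i, (V i)ᴴ * X * V i) x = ∑ i, qf X (V i *ᵥ x) := by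
  rw [qf, phi_quad, Complex.re_sum]
  rfl

lemma phi_nsq {V : Fin m → Matrix (Fin n) (Fin n) ℂ}
    (hunital : ∑ i, (V i)ᴴ * V i = 1) (x : Fin n → ℂ) :
    ∑ i, nsq (V i *ᵥ x) = nsq x := by
  have h := phi_quad V 1 x
  have h2 : ∑ i, (V i)ᴴ * 1 * V i = 1 := by simpa [Matrix.mul_one] using hunital
  rw [h2, one_mulVec] at h
  simp only [one_mulVec] at h
  have := congrArg Complex.re h
  rw [starDot_eq, Complex.ofReal_re, Complex.re_sum] at this
  rw [this]
  refine Finset.sum_congr rfl fun i _ => ?_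
  rw [starDot_eq, Complex.ofReal_re]

lemma herm_phi (V : Fin m → Matrix (Fin n) (Fin n) ℂ) {X : Matrix (Fin n) (Fin n) ℂ}
    (hX : X.IsHermitian) : (∑ i, (V i)ᴴ * X * V i).IsHermitian := by
  rw [Matrix.IsHermitian, conjTranspose_sum]
  refine Finset.sum_congr rfl fun i _ => ?_
  rw [conjTranspose_mul, conjTranspose_mul, conjTranspose_conjTranspose, hX.eq, Matrix.mul_assoc]

lemma lmax_contract {V : Fin m → Matrix (Fin n) (Fin n) ℂ}
    (hunital : ∑ i, (V i)ᴴ * V i = 1) (hn : 0 < n) {X : Matrix (Fin n) (Fin n) ℂ}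
    (hX : X.IsHermitian) (hY : (∑ i, (V i)ᴴ * X * V i).IsHermitian) :
    (⨆ i, hY.eigenvalues i) ≤ ⨆ i, hX.eigenvalues i := by
  obtain ⟨x, hx1, hxe⟩ := exists_lmax_vec hY hn
  have h1 : qf (∑ i, (V i)ᴴ * X * V i) x = ⨆ i, hY.eigenvalues i := qf_eigen hx1 hxe
  have h2 := phi_qf V X x
  rw [h1] at h2
  calc (⨆ i, hY.eigenvalues i) = ∑ i, qf X (V i *ᵥ x) := h2
    _ ≤ ∑ i, (⨆ i, hX.eigenvalues i) * nsq (V i *ᵥ x) :=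
        Finset.sum_le_sum fun i _ => qf_le_lmax hX hn _
    _ = (⨆ i, hX.eigenvalues i) * ∑ i, nsq (V i *ᵥ x) := by rw [Finset.mul_sum]
    _ = ⨆ i, hX.eigenvalues i := by rw [phi_nsq hunital, nsq_one_of_unit hx1, mul_one]

lemma lmin_contract {V : Fin m → Matrix (Fin n) (Fin n) ℂ}
    (hunital : ∑ i, (V i)ᴴ * V i = 1) (hn : 0 < n) {X : Matrix (Fin n) (Fin n) ℂ}
    (hX : X.IsHermitian) (hY : (∑ i, (V i)ᴴ * X * V i).IsHermitian) :
    (⨅ i, hX.eigenvalues i) ≤ ⨅ i, hY.eigenvalues i := by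
  obtain ⟨x, hx1, hxe⟩ := exists_lmin_vec hY hn
  have h1 : qf (∑ i, (V i)ᴴ * X * V i) x = ⨅ i, hY.eigenvalues i := qf_eigen hx1 hxe
  have h2 := phi_qf V X x
  rw [h1] at h2
  calc (⨅ i, hX.eigenvalues i) = (⨅ i, hX.eigenvalues i) * ∑ i, nsq (V i *ᵥ x) := by
        rw [phi_nsq hunital, nsq_one_of_unit hx1, mul_one]
    _ = ∑ i, (⨅ i, hX.eigenvalues i) * nsq (V i *ᵥ x) := by rw [Finset.mul_sum]
    _ ≤ ∑ i, qf X (V i *ᵥ x) := Finset.sum_le_sum fun i _ => lmin_le_qf hX hn _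
    _ = ⨅ i, hY.eigenvalues i := h2.symm

lemma mem_le_one {V : Fin m → Matrix (Fin n) (Fin n) ℂ}
    (hunital : ∑ i, (V i)ᴴ * V i = 1) (hn : 0 < n) {r : ℝ}
    (hr : ∃ (X : Matrix (Fin n) (Fin n) ℂ) (hX : X.IsHermitian)
          (hY : (∑ i, (V i)ᴴ * X * V i).IsHermitian),
        (⨆ i, hX.eigenvalues i) ≠ (⨅ i, hX.eigenvalues i) ∧
        r = ((⨆ i, hY.eigenvalues i) - ⨅ i, hY.eigenvalues i) /
            ((⨆ i, hX.eigenvalues i) - ⨅ i, hX.eigenvalues i)) : r ≤ 1 := by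
  obtain ⟨X, hX, hY, hne, rfl⟩ := hr
  have hlt : (⨅ i, hX.eigenvalues i) < ⨆ i, hX.eigenvalues i :=
    lt_of_le_of_ne (lmin_le_lmax hX hn) (Ne.symm hne)
  rw [div_le_one (by linarith)]
  have h1 := lmax_contract hunital hn hX hY
  have h2 := lmin_contract hunital hn hX hY
  linarith

lemma exists_nonzero_image {V : Fin m → Matrix (Fin n) (Fin n) ℂ}
    (hunital : ∑ i, (V i)ᴴ * V i = 1) {u : Fin n → ℂ} (hu : u ≠ 0) :
    ∃ i, V i *ᵥ u ≠ 0 := by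
  by_contra h
  push_neg at h
  apply hu
  have : u = (∑ i, (V i)ᴴ * V i) *ᵥ u := by rw [hunital, one_mulVec]
  rw [this, sum_mulVec']
  refine Finset.sum_eq_zero fun i _ => ?_
  rw [← mulVec_mulVec, h i, mulVec_zero]

theorem backward (hn : 0 < n) (V : Fin m → Matrix (Fin n) (Fin n) ℂ)
    (hunital : ∑ i, (V i)ᴴ * V i = 1) (u v : Fin n → ℂ) (hu : u ≠ 0) (hv : v ≠ 0)
    (hortho : ∀ i j, star (Matrix.mulVec (V i) u) ⬝ᵥ Matrix.mulVec (V j) v = 0) :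
    sSup {r : ℝ | ∃ (X : Matrix (Fin n) (Fin n) ℂ) (hX : X.IsHermitian)
          (hY : (∑ i, (V i)ᴴ * X * V i).IsHermitian),
        (⨆ i, hX.eigenvalues i) ≠ (⨅ i, hX.eigenvalues i) ∧
        r = ((⨆ i, hY.eigenvalues i) - ⨅ i, hY.eigenvalues i) /
            ((⨆ i, hX.eigenvalues i) - ⨅ i, hX.eigenvalues i)} = 1 := by
  classical
  set E := EuclideanSpace ℂ (Fin n)
  set eqv := WithLp.equiv 2 (Fin n → ℂ) with heqv
  set Ku : Submodule ℂ E := Submodule.span ℂ (Set.range fun i => eqv.symm (V i *ᵥ u)) with hKu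
  set Kv : Submodule ℂ E := Submodule.span ℂ (Set.range fun i => eqv.symm (V i *ᵥ v)) with hKv
  have hKO : Ku ⟂ Kv := by
    rw [hKu, hKv, Submodule.isOrtho_span]
    rintro _ ⟨i, rfl⟩ _ ⟨j, rfl⟩
    rw [EuclideanSpace.inner_eq_star_dotProduct, dotProduct_comm]
    exact hortho i j
  set P : E →L[ℂ] E := Ku.subtypeL ∘L Ku.orthogonalProjectionOnto with hP
  set Q : E →L[ℂ] E := Kv.subtypeL ∘L Kv.orthogonalProjectionOnto with hQ
  set T : E →L[ℂ] E := P - Q with hT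
  have hTsa : IsSelfAdjoint T :=
    (isSelfAdjoint_starProjection Ku).sub (isSelfAdjoint_starProjection Kv)
  set X : Matrix (Fin n) (Fin n) ℂ := Matrix.toEuclideanLin.symm (T : E →ₗ[ℂ] E) with hXdef
  have hXlin : Matrix.toEuclideanLin X = (T : E →ₗ[ℂ] E) := by
    rw [hXdef, LinearEquiv.apply_symm_apply]
  have hX : X.IsHermitian := by
    rw [isHermitian_iff_isSymmetric, hXlin]
    exact ContinuousLinearMap.isSelfAdjoint_iff_isSymmetric.mp hTsa
  have hmulvec : ∀ y : Fin n → ℂ, X *ᵥ y = eqv (T (eqv.symm y)) := by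
    intro y
    have h1 : Matrix.toEuclideanLin X (eqv.symm y) = T (eqv.symm y) := by rw [hXlin]; rfl
    rw [Matrix.toEuclideanLin_apply] at h1
    have h2 := congrArg eqv h1
    exact h2
  -- quadratic form of X in terms of T
  have hquad : ∀ y : Fin n → ℂ, star y ⬝ᵥ X *ᵥ y = (inner ℂ (eqv.symm y) (T (eqv.symm y)) : ℂ) := by
    intro y
    rw [hmulvec y]
    exact (dotProduct_comm _ _).trans (EuclideanSpace.inner_eq_star_dotProduct _ _).symm
  -- projection facts
  have hPfix : ∀ w : E, w ∈ Ku → P w = w := fun w hw => by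
    rw [hP]; exact Submodule.starProjection_eq_self_iff.mpr hw
  have hQfix : ∀ w : E, w ∈ Kv → Q w = w := fun w hw => by
    rw [hQ]; exact Submodule.starProjection_eq_self_iff.mpr hw
  have hPzero : ∀ w : E, w ∈ Kuᗮ → P w = 0 := fun w hw => by
    rw [hP]
    simp [Submodule.orthogonalProjectionOnto_apply_of_mem_orthogonal hw]
  have hQzero : ∀ w : E, w ∈ Kvᗮ → Q w = 0 := fun w hw => by
    rw [hQ]
    simp [Submodule.orthogonalProjectionOnto_apply_of_mem_orthogonal hw]
  have hTfix : ∀ w : E, w ∈ Ku → T w = w := fun w hw => by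
    rw [hT]
    simp [ContinuousLinearMap.sub_apply, hPfix w hw, hQzero w (hKO hw)]
  have hTneg : ∀ w : E, w ∈ Kv → T w = -w := fun w hw => by
    rw [hT]
    simp [ContinuousLinearMap.sub_apply, hQfix w hw, hPzero w (hKO.symm hw)]
  -- Rayleigh bounds for projections
  have projbound : ∀ (K : Submodule ℂ E) (w : E),
      0 ≤ Complex.re (inner ℂ w ((K.subtypeL ∘L K.orthogonalProjectionOnto) w) : ℂ) ∧
      Complex.re (inner ℂ w ((K.subtypeL ∘L K.orthogonalProjectionOnto) w) : ℂ)
        ≤ Complex.re (inner ℂ w w : ℂ) := by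
    intro K w
    set pw : E := (K.subtypeL ∘L K.orthogonalProjectionOnto) w with hpw
    have hpwmem : pw ∈ K := by rw [hpw]; exact Submodule.coe_mem _
    have hsub : w - pw ∈ Kᗮ := Submodule.sub_starProjection_mem_orthogonal w
    have hcross : (inner ℂ (w - pw) pw : ℂ) = 0 := Submodule.inner_left_of_mem_orthogonal hpwmem hsub
    have hcross' : (inner ℂ pw (w - pw) : ℂ) = 0 := by
      rw [← inner_conj_symm, hcross, map_zero]
    have hw_eq : (inner ℂ w pw : ℂ) = inner ℂ pw pw := by
      have expand : (inner ℂ w pw : ℂ) = inner ℂ (w - pw) pw + inner ℂ pw pw := by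
        rw [← inner_add_left]
        rw [sub_add_cancel]
      rw [expand, hcross, zero_add]
    have hww : Complex.re (inner ℂ w w : ℂ)
        = Complex.re (inner ℂ (w - pw) (w - pw) : ℂ) + Complex.re (inner ℂ pw pw : ℂ) := by
      have : (inner ℂ w w : ℂ) = inner ℂ (w - pw) (w - pw) + inner ℂ (w - pw) pw
          + (inner ℂ pw (w - pw) + inner ℂ pw pw) := by
        rw [← inner_add_right, ← inner_add_right, ← inner_add_left, sub_add_cancel]
      rw [this, hcross, hcross']
      simp
    have hn1 : 0 ≤ Complex.re (inner ℂ pw pw : ℂ) := by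
      exact inner_self_nonneg (𝕜 := ℂ) (x := pw)
    have hn2 : 0 ≤ Complex.re (inner ℂ (w - pw) (w - pw) : ℂ) := by
      exact inner_self_nonneg (𝕜 := ℂ) (x := w - pw)
    constructor
    · rw [hw_eq]; exact hn1
    · rw [hw_eq, hww]
      linarith
  have hqf_bound : ∀ y : Fin n → ℂ, |qf X y| ≤ nsq y := by
    intro y
    have hy : (inner ℂ (eqv.symm y) (eqv.symm y) : ℂ) = ((nsq y : ℝ) : ℂ) := by
      rw [← starDot_eq]; exact (EuclideanSpace.inner_eq_star_dotProduct _ _).trans (dotProduct_comm _ _)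
    have hre : Complex.re (inner ℂ (eqv.symm y) (eqv.symm y) : ℂ) = nsq y := by
      rw [hy, Complex.ofReal_re]
    have hqf : qf X y = Complex.re (inner ℂ (eqv.symm y) (P (eqv.symm y)) : ℂ)
        - Complex.re (inner ℂ (eqv.symm y) (Q (eqv.symm y)) : ℂ) := by
      rw [qf, hquad y, hT]
      simp [ContinuousLinearMap.sub_apply, inner_sub_right]
    obtain ⟨hp0, hp1⟩ := projbound Ku (eqv.symm y)
    obtain ⟨hq0, hq1⟩ := projbound Kv (eqv.symm y)
    rw [← hP] at hp0 hp1
    rw [← hQ] at hq0 hq1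
    rw [abs_le, hqf]
    rw [hre] at hp1 hq1
    constructor <;> linarith
  -- unit vectors in Ku and Kv
  obtain ⟨i₀, hw₀⟩ := exists_nonzero_image hunital hu
  obtain ⟨cu, hcu, hcun⟩ := exists_unit_scaled hw₀
  set xh : Fin n → ℂ := cu • (V i₀ *ᵥ u) with hxh
  have hxh1 : star xh ⬝ᵥ xh = 1 := by rw [starDot_eq, hcun]; norm_num
  have hxhmem : eqv.symm xh ∈ Ku := by
    rw [hxh]
    have : eqv.symm (cu • (V i₀ *ᵥ u)) = cu • eqv.symm (V i₀ *ᵥ u) := rfl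
    rw [this]
    exact Submodule.smul_mem _ _ (Submodule.subset_span ⟨i₀, rfl⟩)
  have hXxh : X *ᵥ xh = (1 : ℝ) • xh := by
    rw [hmulvec, hTfix _ hxhmem]
    simp
  obtain ⟨j₀, hz₀⟩ := exists_nonzero_image hunital hv
  obtain ⟨cv, hcv, hcvn⟩ := exists_unit_scaled hz₀
  set zh : Fin n → ℂ := cv • (V j₀ *ᵥ v) with hzh
  have hzh1 : star zh ⬝ᵥ zh = 1 := by rw [starDot_eq, hcvn]; norm_num
  have hzhmem : eqv.symm zh ∈ Kv := by
    rw [hzh]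
    have : eqv.symm (cv • (V j₀ *ᵥ v)) = cv • eqv.symm (V j₀ *ᵥ v) := rfl
    rw [this]
    exact Submodule.smul_mem _ _ (Submodule.subset_span ⟨j₀, rfl⟩)
  have hXzh : X *ᵥ zh = (-1 : ℝ) • zh := by
    rw [hmulvec, hTneg _ hzhmem]
    have h1 : eqv (-(eqv.symm zh)) = -(eqv (eqv.symm zh)) := rfl
    rw [h1, Equiv.apply_symm_apply]
    simp
  -- spectral quantities of X
  have hlmaxX : (⨆ i, hX.eigenvalues i) = 1 := by
    refine le_antisymm ?_ ?_
    · obtain ⟨e, he1, hee⟩ := exists_lmax_vec hX hn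
      have h1 : qf X e = ⨆ i, hX.eigenvalues i := qf_eigen he1 hee
      have h2 := hqf_bound e
      rw [h1, nsq_one_of_unit he1] at h2
      exact (abs_le.mp h2).2
    · have h1 : qf X xh = 1 := qf_eigen hxh1 hXxh
      have h2 := qf_le_lmax hX hn xh
      rw [h1, nsq_one_of_unit hxh1, mul_one] at h2
      exact h2
  have hlminX : (⨅ i, hX.eigenvalues i) = -1 := by
    refine le_antisymm ?_ ?_
    · have h1 : qf X zh = -1 := qf_eigen hzh1 hXzh
      have h2 := lmin_le_qf hX hn zh
      rw [h1, nsq_one_of_unit hzh1, mul_one] at h2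
      exact h2
    · obtain ⟨e, he1, hee⟩ := exists_lmin_vec hX hn
      have h1 : qf X e = ⨅ i, hX.eigenvalues i := qf_eigen he1 hee
      have h2 := hqf_bound e
      rw [h1, nsq_one_of_unit he1] at h2
      linarith [(abs_le.mp h2).1]
  -- spectral quantities of Y
  have hY : (∑ i, (V i)ᴴ * X * V i).IsHermitian := herm_phi V hX
  obtain ⟨du, hdu, hdun⟩ := exists_unit_scaled hu
  set uh : Fin n → ℂ := du • u with huh
  have huh1 : star uh ⬝ᵥ uh = 1 := by rw [starDot_eq, hdun]; norm_num
  have hViuh : ∀ i, X *ᵥ (V i *ᵥ uh) = V i *ᵥ uh := by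
    intro i
    have hmem : eqv.symm (V i *ᵥ uh) ∈ Ku := by
      have h1 : V i *ᵥ uh = du • (V i *ᵥ u) := by rw [huh, mulVec_smul]
      have h2 : eqv.symm (du • (V i *ᵥ u)) = du • eqv.symm (V i *ᵥ u) := rfl
      rw [h1, h2]
      exact Submodule.smul_mem _ _ (Submodule.subset_span ⟨i, rfl⟩)
    rw [hmulvec, hTfix _ hmem, Equiv.apply_symm_apply]
  have hqfY_uh : qf (∑ i, (V i)ᴴ * X * V i) uh = 1 := by
    rw [phi_qf]
    have : ∀ i, qf X (V i *ᵥ uh) = nsq (V i *ᵥ uh) := by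
      intro i
      rw [qf, hViuh i, starDot_eq, Complex.ofReal_re]
    calc ∑ i, qf X (V i *ᵥ uh) = ∑ i, nsq (V i *ᵥ uh) := Finset.sum_congr rfl fun i _ => this i
      _ = nsq uh := phi_nsq hunital uh
      _ = 1 := nsq_one_of_unit huh1
  obtain ⟨dv, hdv, hdvn⟩ := exists_unit_scaled hv
  set vh : Fin n → ℂ := dv • v with hvh
  have hvh1 : star vh ⬝ᵥ vh = 1 := by rw [starDot_eq, hdvn]; norm_num
  have hVivh : ∀ i, X *ᵥ (V i *ᵥ vh) = -(V i *ᵥ vh) := by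
    intro i
    have hmem : eqv.symm (V i *ᵥ vh) ∈ Kv := by
      have h1 : V i *ᵥ vh = dv • (V i *ᵥ v) := by rw [hvh, mulVec_smul]
      have h2 : eqv.symm (dv • (V i *ᵥ v)) = dv • eqv.symm (V i *ᵥ v) := rfl
      rw [h1, h2]
      exact Submodule.smul_mem _ _ (Submodule.subset_span ⟨i, rfl⟩)
    rw [hmulvec, hTneg _ hmem]
    rfl
  have hqfY_vh : qf (∑ i, (V i)ᴴ * X * V i) vh = -1 := by
    rw [phi_qf]
    have : ∀ i, qf X (V i *ᵥ vh) = -nsq (V i *ᵥ vh) := by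
      intro i
      rw [qf, hVivh i, dotProduct_neg, starDot_eq]
      simp
    calc ∑ i, qf X (V i *ᵥ vh) = ∑ i, -nsq (V i *ᵥ vh) := Finset.sum_congr rfl fun i _ => this i
      _ = -nsq vh := by rw [Finset.sum_neg_distrib, phi_nsq hunital vh]
      _ = -1 := by rw [nsq_one_of_unit hvh1]
  have hlmaxY : (⨆ i, hY.eigenvalues i) = 1 := by
    refine le_antisymm (by rw [← hlmaxX]; exact lmax_contract hunital hn hX hY) ?_
    have h2 := qf_le_lmax hY hn uh
    rw [hqfY_uh, nsq_one_of_unit huh1, mul_one] at h2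
    exact h2
  have hlminY : (⨅ i, hY.eigenvalues i) = -1 := by
    refine le_antisymm ?_ (by rw [← hlminX]; exact lmin_contract hunital hn hX hY)
    have h2 := lmin_le_qf hY hn vh
    rw [hqfY_vh, nsq_one_of_unit hvh1, mul_one] at h2
    exact h2
  -- conclude
  refine IsGreatest.csSup_eq ⟨⟨X, hX, hY, ?_, ?_⟩, fun r hr => mem_le_one hunital hn hr⟩
  · rw [hlmaxX, hlminX]; norm_num
  · rw [hlmaxX, hlminX, hlmaxY, hlminY]; norm_num

-- real scalar multiplication and re
lemma real_mul_re (a : ℝ) (z : ℂ) : (((a : ℝ) : ℂ) * z).re = a * z.re := by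
  simp [Complex.mul_re]

/-- the unit sphere -/
def Sph (n : ℕ) : Set (Fin n → ℂ) := {x | nsq x = 1}

lemma continuous_nsq : Continuous (nsq : (Fin n → ℂ) → ℝ) := by
  unfold nsq
  exact continuous_finset_sum _ fun i _ => Complex.continuous_normSq.comp (continuous_apply i)

lemma isCompact_Sph : IsCompact (Sph n) := by
  refine IsCompact.of_isClosed_subset
    (isCompact_univ_pi fun _ : Fin n => isCompact_closedBall (0 : ℂ) 1) ?_ ?_
  · have : Sph n = nsq ⁻¹' {1} := rfl
    rw [this]
    exact IsClosed.preimage continuous_nsq isClosed_singleton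
  · intro x hx
    rw [Set.mem_univ_pi]
    intro i
    rw [Metric.mem_closedBall, dist_zero_right]
    have hx1 : nsq x = 1 := hx
    unfold nsq at hx1
    have hsum := Finset.single_le_sum (f := fun l => Complex.normSq (x l))
      (fun l _ => Complex.normSq_nonneg _) (Finset.mem_univ i)
    rw [hx1] at hsum
    have h2 : ‖x i‖ ^ 2 ≤ 1 := by rw [Complex.sq_norm]; exact hsum
    nlinarith [norm_nonneg (x i)]

lemma continuous_qf_fixed (y : Fin n → ℂ) :
    Continuous fun X : Matrix (Fin n) (Fin n) ℂ => qf X y := by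
  unfold qf
  exact Complex.continuous_re.comp
    (continuous_const.dotProduct (continuous_id.matrix_mulVec continuous_const))

/-- the compact body -/
def KK (n : ℕ) : Set (Matrix (Fin n) (Fin n) ℂ) :=
  {X | X.IsHermitian} ∩ ⋂ y : Fin n → ℂ, {X | |qf X y| ≤ nsq y}

lemma mem_KK {X : Matrix (Fin n) (Fin n) ℂ} :
    X ∈ KK n ↔ X.IsHermitian ∧ ∀ y, |qf X y| ≤ nsq y := by
  simp [KK]

lemma isClosed_KK : IsClosed (KK n) := by
  refine IsClosed.inter ?_ (isClosed_iInter fun y =>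
    isClosed_le (continuous_qf_fixed y).abs continuous_const)
  have : {X : Matrix (Fin n) (Fin n) ℂ | X.IsHermitian} = {X | Xᴴ = X} := rfl
  rw [this]
  exact isClosed_eq (continuous_id.matrix_conjTranspose) continuous_id

lemma qf_single (X : Matrix (Fin n) (Fin n) ℂ) (j : Fin n) :
    qf X (Pi.single j 1) = (X j j).re := by
  rw [qf]
  rw [mulVec_single]
  have hstar : star (Pi.single j (1:ℂ)) = (Pi.single j (1:ℂ) : Fin n → ℂ) := by
    funext l
    rcases eq_or_ne l j with rfl | h
    · simp
    · simp [Pi.single_apply, h]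
  rw [hstar, single_dotProduct]
  simp

lemma nsq_single (j : Fin n) : nsq (Pi.single j (1:ℂ)) = 1 := by
  unfold nsq
  rw [Finset.sum_eq_single j]
  · simp
  · intro l _ h
    simp [Pi.single_apply, h]
  · intro h; exact absurd (Finset.mem_univ j) h

lemma qf_two (X : Matrix (Fin n) (Fin n) ℂ) {j k : Fin n} (hjk : j ≠ k) (a b : ℂ) :
    qf X (Pi.single j a + Pi.single k b)
      = ((starRingEnd ℂ) a * (X j j * a + X j k * b)
        + (starRingEnd ℂ) b * (X k j * a + X k k * b)).re := by
  rw [qf]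
  have hstar : star (Pi.single j a + Pi.single k b)
      = ((Pi.single j ((starRingEnd ℂ) a) + Pi.single k ((starRingEnd ℂ) b)) : Fin n → ℂ) := by
    funext l
    rcases eq_or_ne l j with rfl | h1
    · simp [Pi.single_apply, hjk.symm, Ne.symm hjk]
    · rcases eq_or_ne l k with rfl | h2
      · simp [Pi.single_apply, h1]
      · simp [Pi.single_apply, h1, h2]
  have hmv : X *ᵥ (Pi.single j a + Pi.single k b)
      = (fun i => X i j * a) + (fun i => X i k * b) := by
    rw [mulVec_add, mulVec_single, mulVec_single]
    rfl
  rw [hstar, hmv, add_dotProduct, single_dotProduct, single_dotProduct]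
  simp only [Pi.add_apply]

lemma nsq_two {j k : Fin n} (hjk : j ≠ k) (a b : ℂ) :
    nsq (Pi.single j a + Pi.single k b) = Complex.normSq a + Complex.normSq b := by
  unfold nsq
  rw [← Finset.sum_subset (Finset.subset_univ {j, k})]
  · rw [Finset.sum_insert (by simp [hjk]), Finset.sum_singleton]
    simp [Pi.single_apply, hjk, Ne.symm hjk]
  · intro l _ hl
    simp only [Finset.mem_insert, Finset.mem_singleton, not_or] at hl
    simp [Pi.single_apply, hl.1, hl.2]

lemma KK_entry_bound {X : Matrix (Fin n) (Fin n) ℂ} (hX : X ∈ KK n) (j k : Fin n) :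
    ‖X j k‖ ≤ 4 := by
  obtain ⟨hH, hb⟩ := mem_KK.mp hX
  have hdiag : ∀ l, |(X l l).re| ≤ 1 ∧ (X l l).im = 0 := by
    intro l
    constructor
    · have := hb (Pi.single l 1)
      rw [qf_single, nsq_single] at this
      exact this
    · have h1 : (starRingEnd ℂ) (X l l) = X l l := by
        have := congrFun (congrFun hH.eq l) l
        rw [conjTranspose_apply] at this
        exact this
      have := Complex.conj_eq_iff_im.mp h1
      exact this
  rcases eq_or_ne j k with rfl | hjk
  · have h1 := (hdiag j).1
    have h2 := (hdiag j).2
    have : X j j = ((X j j).re : ℂ) := Complex.ext rfl (by simp [h2])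
    rw [this, Complex.norm_real, Real.norm_eq_abs]
    linarith [abs_nonneg (X j j).re, h1]
  · have hsym : X k j = (starRingEnd ℂ) (X j k) := by
      have := congrFun (congrFun hH.eq k) j
      rw [conjTranspose_apply] at this
      exact this.symm
    -- first test vector (1,1)
    have h1 := hb (Pi.single j 1 + Pi.single k 1)
    rw [qf_two X hjk 1 1, nsq_two hjk 1 1] at h1
    have e1 : ((starRingEnd ℂ) 1 * (X j j * 1 + X j k * 1)
        + (starRingEnd ℂ) 1 * (X k j * 1 + X k k * 1)).re
        = (X j j).re + (X k k).re + 2 * (X j k).re := by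
      rw [hsym]
      simp [Complex.add_re, Complex.conj_re]
      ring
    rw [e1, Complex.normSq_one] at h1
    -- second test vector (1, I)
    have h2 := hb (Pi.single j 1 + Pi.single k Complex.I)
    rw [qf_two X hjk 1 Complex.I, nsq_two hjk 1 Complex.I] at h2
    have e2 : ((starRingEnd ℂ) 1 * (X j j * 1 + X j k * Complex.I)
        + (starRingEnd ℂ) Complex.I * (X k j * 1 + X k k * Complex.I)).re
        = (X j j).re + (X k k).re - 2 * (X j k).im := by
      rw [hsym]
      simp [Complex.mul_re, Complex.mul_im, Complex.add_re, Complex.conj_re, Complex.conj_im,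
        Complex.I_re, Complex.I_im]
      ring
    rw [e2, Complex.normSq_I, Complex.normSq_one] at h2
    have hj1 := (hdiag j).1
    have hk1 := (hdiag k).1
    rw [abs_le] at h1 h2 hj1 hk1
    have hre : |(X j k).re| ≤ 2 := by rw [abs_le]; constructor <;> linarith [h1.1, h1.2]
    have him : |(X j k).im| ≤ 2 := by rw [abs_le]; constructor <;> linarith [h2.1, h2.2]
    calc ‖X j k‖ ≤ |(X j k).re| + |(X j k).im| := Complex.norm_le_abs_re_add_abs_im _
      _ ≤ 4 := by linarith


lemma isCompact_KK : IsCompact (KK n) := by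
  refine IsCompact.of_isClosed_subset
    (isCompact_univ_pi fun _ : Fin n =>
      isCompact_univ_pi fun _ : Fin n => isCompact_closedBall (0 : ℂ) 4) isClosed_KK ?_
  intro X hX
  apply Set.mem_univ_pi.mpr
  intro j
  rw [Set.mem_univ_pi]
  intro k
  rw [Metric.mem_closedBall, dist_zero_right]
  exact KK_entry_bound hX j k

lemma continuous_obj (V : Fin m → Matrix (Fin n) (Fin n) ℂ) :
    Continuous (fun t : Matrix (Fin n) (Fin n) ℂ × ((Fin n → ℂ) × (Fin n → ℂ)) =>
      qf (∑ i, (V i)ᴴ * t.1 * V i) t.2.1 - qf (∑ i, (V i)ᴴ * t.1 * V i) t.2.2) := by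
  have hphi : Continuous (fun t : Matrix (Fin n) (Fin n) ℂ × ((Fin n → ℂ) × (Fin n → ℂ)) =>
      ∑ i, (V i)ᴴ * t.1 * V i) :=
    continuous_finset_sum _ fun i _ =>
      (continuous_const.matrix_mul continuous_fst).matrix_mul continuous_const
  have h1 : Continuous (fun t : Matrix (Fin n) (Fin n) ℂ × ((Fin n → ℂ) × (Fin n → ℂ)) =>
      qf (∑ i, (V i)ᴴ * t.1 * V i) t.2.1) := by
    unfold qf
    exact Complex.continuous_re.comp
      ((continuous_star.comp (continuous_fst.comp continuous_snd)).dotProduct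
        (hphi.matrix_mulVec (continuous_fst.comp continuous_snd)))
  have h2 : Continuous (fun t : Matrix (Fin n) (Fin n) ℂ × ((Fin n → ℂ) × (Fin n → ℂ)) =>
      qf (∑ i, (V i)ᴴ * t.1 * V i) t.2.2) := by
    unfold qf
    exact Complex.continuous_re.comp
      ((continuous_star.comp (continuous_snd.comp continuous_snd)).dotProduct
        (hphi.matrix_mulVec (continuous_snd.comp continuous_snd)))
  exact h1.sub h2

lemma qf_affine (A : Matrix (Fin n) (Fin n) ℂ) (a b : ℝ) (y : Fin n → ℂ) :
    qf (((a : ℝ) : ℂ) • A + ((b : ℝ) : ℂ) • 1) y = a * qf A y + b * nsq y := by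
  rw [qf, add_mulVec, smul_mulVec, smul_mulVec, one_mulVec, dotProduct_add,
    dotProduct_smul, dotProduct_smul, starDot_eq]
  rw [smul_eq_mul, smul_eq_mul, Complex.add_re, real_mul_re, real_mul_re, Complex.ofReal_re]
  rfl

lemma herm_affine {A : Matrix (Fin n) (Fin n) ℂ} (hA : A.IsHermitian) (a b : ℝ) :
    (((a : ℝ) : ℂ) • A + ((b : ℝ) : ℂ) • 1 : Matrix (Fin n) (Fin n) ℂ).IsHermitian := by
  have : (((a : ℝ) : ℂ) • A + ((b : ℝ) : ℂ) • 1 : Matrix (Fin n) (Fin n) ℂ)ᴴ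
      = ((a : ℝ) : ℂ) • A + ((b : ℝ) : ℂ) • 1 := by
    rw [conjTranspose_add, conjTranspose_smul, conjTranspose_smul, conjTranspose_one, hA.eq,
      Complex.star_def, Complex.conj_ofReal, Complex.conj_ofReal]
  exact this

theorem forward (hn : 0 < n) (V : Fin m → Matrix (Fin n) (Fin n) ℂ)
    (hunital : ∑ i, (V i)ᴴ * V i = 1)
    (hsup : sSup {r : ℝ | ∃ (X : Matrix (Fin n) (Fin n) ℂ) (hX : X.IsHermitian)
          (hY : (∑ i, (V i)ᴴ * X * V i).IsHermitian),
        (⨆ i, hX.eigenvalues i) ≠ (⨅ i, hX.eigenvalues i) ∧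
        r = ((⨆ i, hY.eigenvalues i) - ⨅ i, hY.eigenvalues i) /
            ((⨆ i, hX.eigenvalues i) - ⨅ i, hX.eigenvalues i)} = 1) :
    ∃ u v : Fin n → ℂ, u ≠ 0 ∧ v ≠ 0 ∧
      ∀ i j, star (Matrix.mulVec (V i) u) ⬝ᵥ Matrix.mulVec (V j) v = 0 := by
  classical
  set S := {r : ℝ | ∃ (X : Matrix (Fin n) (Fin n) ℂ) (hX : X.IsHermitian)
          (hY : (∑ i, (V i)ᴴ * X * V i).IsHermitian),
        (⨆ i, hX.eigenvalues i) ≠ (⨅ i, hX.eigenvalues i) ∧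
        r = ((⨆ i, hY.eigenvalues i) - ⨅ i, hY.eigenvalues i) /
            ((⨆ i, hX.eigenvalues i) - ⨅ i, hX.eigenvalues i)} with hS
  have hSne : S.Nonempty := by
    by_contra h
    rw [Set.not_nonempty_iff_eq_empty] at h
    rw [h, Real.sSup_empty] at hsup
    norm_num at hsup
  -- the compact search region
  set C : Set (Matrix (Fin n) (Fin n) ℂ × ((Fin n → ℂ) × (Fin n → ℂ))) :=
    (KK n) ×ˢ ((Sph n) ×ˢ (Sph n)) with hC
  have hCcpt : IsCompact C := isCompact_KK.prod (isCompact_Sph.prod isCompact_Sph)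
  have hCne : C.Nonempty := by
    refine ⟨(0, (Pi.single ⟨0, hn⟩ 1, Pi.single ⟨0, hn⟩ 1)), ?_, ?_, ?_⟩
    · refine mem_KK.2 ⟨Matrix.isHermitian_zero, fun y => ?_⟩
      rw [qf]
      rw [Matrix.zero_mulVec, dotProduct_zero]
      simpa using nsq_nonneg y
    · exact nsq_single _
    · exact nsq_single _
  set f : Matrix (Fin n) (Fin n) ℂ × ((Fin n → ℂ) × (Fin n → ℂ)) → ℝ :=
    fun t => qf (∑ i, (V i)ᴴ * t.1 * V i) t.2.1 - qf (∑ i, (V i)ᴴ * t.1 * V i) t.2.2 with hf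
  obtain ⟨t0, ht0C, ht0max⟩ := hCcpt.exists_isMaxOn hCne (continuous_obj V).continuousOn
  obtain ⟨X0, p0, q0⟩ := t0
  obtain ⟨hX0K, hp0S, hq0S⟩ := ht0C
  obtain ⟨hX0herm, hX0b⟩ := mem_KK.mp hX0K
  -- every ratio value gives a lower bound for the max
  have key : ∀ r ∈ S, 2 * r ≤ f (X0, (p0, q0)) := by
    rintro r ⟨X₁, hX₁, hY₁, hne, rfl⟩
    have hlt : (⨅ i, hX₁.eigenvalues i) < ⨆ i, hX₁.eigenvalues i :=
      lt_of_le_of_ne (lmin_le_lmax hX₁ hn) (Ne.symm hne)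
    set M : ℝ := ⨆ i, hX₁.eigenvalues i with hM
    set mi : ℝ := ⨅ i, hX₁.eigenvalues i with hmi
    have hd : (0:ℝ) < M - mi := by linarith
    set a : ℝ := 2 / (M - mi) with ha'
    set b : ℝ := -((M + mi) / (M - mi)) with hb'
    have ha : 0 < a := by positivity
    have hab1 : a * M + b = 1 := by
      rw [ha', hb']
      field_simp
      ring
    have hab2 : a * mi + b = -1 := by
      rw [ha', hb']
      field_simp
      ring
    set X' : Matrix (Fin n) (Fin n) ℂ := ((a : ℝ) : ℂ) • X₁ + ((b : ℝ) : ℂ) • 1 with hX'def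
    have hX' : X'.IsHermitian := herm_affine hX₁ a b
    have hX'K : X' ∈ KK n := by
      refine mem_KK.2 ⟨hX', fun y => ?_⟩
      have h1 := qf_le_lmax hX₁ hn y
      have h2 := lmin_le_qf hX₁ hn y
      rw [← hM] at h1
      rw [← hmi] at h2
      have hs := nsq_nonneg y
      rw [hX'def, qf_affine, abs_le]
      constructor
      · have h2' : a * (mi * nsq y) ≤ a * qf X₁ y := mul_le_mul_of_nonneg_left h2 ha.le
        nlinarith [h2', hab2, hs]
      · have h1' : a * qf X₁ y ≤ a * (M * nsq y) := mul_le_mul_of_nonneg_left h1 ha.le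
        nlinarith [h1', hab1, hs]
    have hY' : (∑ i, (V i)ᴴ * X' * V i)
        = ((a : ℝ) : ℂ) • (∑ i, (V i)ᴴ * X₁ * V i) + ((b : ℝ) : ℂ) • 1 := by
      conv_rhs => rw [← hunital]
      rw [Finset.smul_sum, Finset.smul_sum, ← Finset.sum_add_distrib]
      refine Finset.sum_congr rfl fun i _ => ?_
      rw [hX'def]
      rw [Matrix.mul_add, Matrix.add_mul]
      rw [Matrix.mul_smul, Matrix.smul_mul, Matrix.mul_smul, Matrix.smul_mul, Matrix.mul_one]
    obtain ⟨p₁, hp₁u, hp₁e⟩ := exists_lmax_vec hY₁ hn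
    obtain ⟨q₁, hq₁u, hq₁e⟩ := exists_lmin_vec hY₁ hn
    have hfp : qf (∑ i, (V i)ᴴ * X' * V i) p₁ = a * (⨆ i, hY₁.eigenvalues i) + b := by
      rw [hY', qf_affine, qf_eigen hp₁u hp₁e, nsq_one_of_unit hp₁u, mul_one]
    have hfq : qf (∑ i, (V i)ᴴ * X' * V i) q₁ = a * (⨅ i, hY₁.eigenvalues i) + b := by
      rw [hY', qf_affine, qf_eigen hq₁u hq₁e, nsq_one_of_unit hq₁u, mul_one]
    have hmem' : (X', (p₁, q₁)) ∈ C :=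
      ⟨hX'K, nsq_one_of_unit hp₁u, nsq_one_of_unit hq₁u⟩
    have hle := ht0max hmem'
    have hval : f (X', (p₁, q₁))
        = a * ((⨆ i, hY₁.eigenvalues i) - ⨅ i, hY₁.eigenvalues i) := by
      rw [hf]
      simp only
      rw [hfp, hfq]
      ring
    have hgoal : 2 * (((⨆ i, hY₁.eigenvalues i) - ⨅ i, hY₁.eigenvalues i) / (M - mi))
        = a * ((⨆ i, hY₁.eigenvalues i) - ⨅ i, hY₁.eigenvalues i) := by
      rw [ha']
      field_simp
    rw [hgoal, ← hval]
    exact hle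
  -- the max value is at least 2
  have h2le : 2 ≤ f (X0, (p0, q0)) := by
    have hub : ∀ r ∈ S, r ≤ f (X0, (p0, q0)) / 2 := by
      intro r hr
      have h := key r hr
      rw [le_div_iff₀ (by norm_num : (0:ℝ) < 2)]
      linarith
    have h2 := csSup_le hSne hub
    rw [hsup, le_div_iff₀ (by norm_num : (0:ℝ) < 2)] at h2
    linarith
  -- and at most 2, with equalities
  have hnp0 : nsq p0 = 1 := hp0S
  have hnq0 : nsq q0 = 1 := hq0S
  have hqfp_le : qf (∑ i, (V i)ᴴ * X0 * V i) p0 ≤ 1 := by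
    rw [phi_qf]
    calc ∑ i, qf X0 (V i *ᵥ p0) ≤ ∑ i, nsq (V i *ᵥ p0) :=
          Finset.sum_le_sum fun i _ => le_trans (le_abs_self _) (hX0b _)
      _ = nsq p0 := phi_nsq hunital p0
      _ = 1 := hnp0
  have hqfq_ge : -1 ≤ qf (∑ i, (V i)ᴴ * X0 * V i) q0 := by
    rw [phi_qf]
    calc (-1 : ℝ) = -nsq q0 := by rw [hnq0]
      _ = ∑ i, -nsq (V i *ᵥ q0) := by
          rw [Finset.sum_neg_distrib, phi_nsq hunital q0]
      _ ≤ ∑ i, qf X0 (V i *ᵥ q0) := Finset.sum_le_sum fun i _ => by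
          have := (abs_le.mp (hX0b (V i *ᵥ q0))).1
          linarith
  have hfeq : f (X0, (p0, q0))
      = qf (∑ i, (V i)ᴴ * X0 * V i) p0 - qf (∑ i, (V i)ᴴ * X0 * V i) q0 := rfl
  have hqfp : qf (∑ i, (V i)ᴴ * X0 * V i) p0 = 1 := by
    rw [hfeq] at h2le
    linarith
  have hqfq : qf (∑ i, (V i)ᴴ * X0 * V i) q0 = -1 := by
    rw [hfeq] at h2le
    linarith
  -- termwise equalities
  have hterm_p : ∀ i, qf X0 (V i *ᵥ p0) = nsq (V i *ᵥ p0) := by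
    have hsum0 : ∑ i, (nsq (V i *ᵥ p0) - qf X0 (V i *ᵥ p0)) = 0 := by
      rw [Finset.sum_sub_distrib, phi_nsq hunital p0, ← phi_qf, hqfp, hnp0, sub_self]
    have hpos : ∀ i ∈ Finset.univ, 0 ≤ nsq (V i *ᵥ p0) - qf X0 (V i *ᵥ p0) := by
      intro i _
      have := le_trans (le_abs_self _) (hX0b (V i *ᵥ p0))
      linarith
    intro i
    have := (Finset.sum_eq_zero_iff_of_nonneg hpos).mp hsum0 i (Finset.mem_univ i)
    linarith
  have hterm_q : ∀ i, qf X0 (V i *ᵥ q0) = -nsq (V i *ᵥ q0) := by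
    have hsum0 : ∑ i, (nsq (V i *ᵥ q0) + qf X0 (V i *ᵥ q0)) = 0 := by
      rw [Finset.sum_add_distrib, phi_nsq hunital q0, ← phi_qf, hqfq, hnq0]
      ring
    have hpos : ∀ i ∈ Finset.univ, 0 ≤ nsq (V i *ᵥ q0) + qf X0 (V i *ᵥ q0) := by
      intro i _
      have := (abs_le.mp (hX0b (V i *ᵥ q0))).1
      linarith
    intro i
    have := (Finset.sum_eq_zero_iff_of_nonneg hpos).mp hsum0 i (Finset.mem_univ i)
    linarith
  -- positive semidefinite companions
  have hpsd1 : Matrix.PosSemidef ((1 : Matrix (Fin n) (Fin n) ℂ) - X0) := by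
    refine Matrix.PosSemidef.of_dotProduct_mulVec_nonneg (Matrix.isHermitian_one.sub hX0herm) fun x => ?_
    have hq : star x ⬝ᵥ ((1 : Matrix (Fin n) (Fin n) ℂ) - X0) *ᵥ x
        = (((nsq x - qf X0 x : ℝ)) : ℂ) := by
      rw [Matrix.sub_mulVec, one_mulVec, dotProduct_sub, starDot_eq, qf_complex hX0herm,
        Complex.ofReal_sub]
    rw [hq]
    rw [Complex.zero_le_real]
    have := le_trans (le_abs_self _) (hX0b x)
    linarith
  have hpsd2 : Matrix.PosSemidef ((1 : Matrix (Fin n) (Fin n) ℂ) + X0) := by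
    refine Matrix.PosSemidef.of_dotProduct_mulVec_nonneg (Matrix.isHermitian_one.add hX0herm) fun x => ?_
    have hq : star x ⬝ᵥ ((1 : Matrix (Fin n) (Fin n) ℂ) + X0) *ᵥ x
        = (((nsq x + qf X0 x : ℝ)) : ℂ) := by
      rw [Matrix.add_mulVec, one_mulVec, dotProduct_add, starDot_eq, qf_complex hX0herm,
        Complex.ofReal_add]
    rw [hq]
    rw [Complex.zero_le_real]
    have := (abs_le.mp (hX0b x)).1
    linarith
  have hfix_p : ∀ i, X0 *ᵥ (V i *ᵥ p0) = V i *ᵥ p0 := by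
    intro i
    have h0 : star (V i *ᵥ p0) ⬝ᵥ ((1 : Matrix (Fin n) (Fin n) ℂ) - X0) *ᵥ (V i *ᵥ p0) = 0 := by
      rw [Matrix.sub_mulVec, one_mulVec, dotProduct_sub, starDot_eq, qf_complex hX0herm,
        hterm_p i, sub_self]
    have := (hpsd1.dotProduct_mulVec_zero_iff (V i *ᵥ p0)).1 h0
    rw [Matrix.sub_mulVec, one_mulVec, sub_eq_zero] at this
    exact this.symm
  have hneg_q : ∀ j, X0 *ᵥ (V j *ᵥ q0) = -(V j *ᵥ q0) := by
    intro j
    have h0 : star (V j *ᵥ q0) ⬝ᵥ ((1 : Matrix (Fin n) (Fin n) ℂ) + X0) *ᵥ (V j *ᵥ q0) = 0 := by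
      rw [Matrix.add_mulVec, one_mulVec, dotProduct_add, starDot_eq, qf_complex hX0herm,
        hterm_q j, Complex.ofReal_neg, add_neg_cancel]
    have := (hpsd2.dotProduct_mulVec_zero_iff (V j *ᵥ q0)).1 h0
    rw [Matrix.add_mulVec, one_mulVec] at this
    exact eq_neg_of_add_eq_zero_right this
  refine ⟨p0, q0, ?_, ?_, ?_⟩
  · intro h
    rw [h] at hnp0
    rw [(nsq_eq_zero_iff (0 : Fin n → ℂ)).2 rfl] at hnp0
    norm_num at hnp0
  · intro h
    rw [h] at hnq0
    rw [(nsq_eq_zero_iff (0 : Fin n → ℂ)).2 rfl] at hnq0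
    norm_num at hnq0
  · intro i j
    have hc : star (V i *ᵥ p0) ⬝ᵥ (V j *ᵥ q0) = -(star (V i *ᵥ p0) ⬝ᵥ (V j *ᵥ q0)) := by
      conv_lhs => rw [← hfix_p i]
      rw [star_mulVec, hX0herm.eq, ← dotProduct_mulVec, hneg_q j, dotProduct_neg]
    linear_combination hc / 2


end Stmt19Aux

/-- The contraction rate (in the spectral-diameter seminorm) of a completely positive
unital map equals `1` iff there exist nonzero vectors `u, v` with
`⟨V_i u, V_j v⟩ = 0` for all `i, j`. -/
theorem stmt19 (n m : ℕ) (hn : 0 < n) (V : Fin m → Matrix (Fin n) (Fin n) ℂ)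
    (hunital : ∑ i, (V i)ᴴ * V i = 1) :
    (sSup {r : ℝ | ∃ (X : Matrix (Fin n) (Fin n) ℂ) (hX : X.IsHermitian)
          (hY : (∑ i, (V i)ᴴ * X * V i).IsHermitian),
        (⨆ i, hX.eigenvalues i) ≠ (⨅ i, hX.eigenvalues i) ∧
        r = ((⨆ i, hY.eigenvalues i) - ⨅ i, hY.eigenvalues i) /
            ((⨆ i, hX.eigenvalues i) - ⨅ i, hX.eigenvalues i)} = 1
      ↔ ∃ u v : Fin n → ℂ, u ≠ 0 ∧ v ≠ 0 ∧
          ∀ i j, star (Matrix.mulVec (V i) u) ⬝ᵥ Matrix.mulVec (V j) v = 0) := by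
  constructor
  · intro h
    exact Stmt19Aux.forward hn V hunital h
  · rintro ⟨u, v, hu, hv, ho⟩
    exact Stmt19Aux.backward hn V hunital u v hu hv ho
end
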